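/- arXiv:1811.03117 — 5 statements merged into one kernel-verified Lean document; each statement's English description precedes it below -/
import Mathlib

section
/- Let m and n be integers with |m| ≥ 3 and |n| ≥ 3, and let G = BS(m,n). Then the cyclic subgroup H = ⟨a⟩ generated by a is a maximal amenable subgroup of G. -/
/-- A left-invariant mean on the bounded real-valued functions on `G` exists:
`G` is amenable. -/
def IsAmenable (G : Type*) [Group G] : Prop :=
  ∃ m : (G → ℝ) → ℝ,
    (∀ f₁ f₂ : G → ℝ, Bornology.IsBounded (Set.range f₁) → Bornology.IsBounded (Set.range f₂) →
      m (f₁ + f₂) = m f₁ + m f₂) ∧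
    (∀ (c : ℝ) (f : G → ℝ), Bornology.IsBounded (Set.range f) → m (c • f) = c * m f) ∧
    (∀ f : G → ℝ, Bornology.IsBounded (Set.range f) → (∀ x, 0 ≤ f x) → 0 ≤ m f) ∧
    m (fun _ => 1) = 1 ∧
    (∀ (g : G) (f : G → ℝ), Bornology.IsBounded (Set.range f) →
      m (fun x => f (g * x)) = m f)

/-- `H` is a maximal amenable subgroup of `G`. -/
def MaximalAmenable {G : Type*} [Group G] (H : Subgroup G) : Prop :=
  IsAmenable H ∧ ∀ K : Subgroup G, IsAmenable K → H ≤ K → K = H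

/-- The defining relator set of the Baumslag–Solitar group `BS(m, n)`:
`a` is indexed by `false`, `t` by `true`. -/
def bsRels (m n : ℤ) : Set (FreeGroup Bool) :=
  {FreeGroup.of true * FreeGroup.of false ^ m * (FreeGroup.of true)⁻¹ * (FreeGroup.of false ^ n)⁻¹}

/-- The Baumslag–Solitar group `BS(m, n) = ⟨a, t ∣ t a^m t⁻¹ = a^n⟩`. -/
abbrev BS (m n : ℤ) := PresentedGroup (bsRels m n)

/-- The generator `a` of `BS(m, n)`. -/
def BS.a (m n : ℤ) : BS m n := PresentedGroup.of false

/-- The generator `t` of `BS(m, n)`. -/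
def BS.t (m n : ℤ) : BS m n := PresentedGroup.of true

namespace BSwork

open Filter Topology

lemma bdd_iff {G : Type*} (f : G → ℝ) :
    Bornology.IsBounded (Set.range f) ↔ ∃ C, ∀ x, |f x| ≤ C := by
  rw [isBounded_iff_forall_norm_le]
  constructor
  · rintro ⟨C, hC⟩
    exact ⟨C, fun x => by simpa [Real.norm_eq_abs] using hC _ (Set.mem_range_self x)⟩
  · rintro ⟨C, hC⟩
    exact ⟨C, by rintro y ⟨x, rfl⟩; simpa [Real.norm_eq_abs] using hC x⟩

/-- Cesàro averages along powers of `α`. -/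
noncomputable def ces {G : Type*} [Group G] (α : G) (f : G → ℝ) (N : ℕ) : ℝ :=
  (∑ i ∈ Finset.range (N + 1), f (α ^ (i : ℤ))) / (N + 1)

section gen
variable {G : Type*} [Group G] (α : G) (f : G → ℝ)

/-- shifted partial sums -/
noncomputable def shsum (N : ℕ) (b : ℤ) : ℝ :=
  ∑ i ∈ Finset.range (N + 1), f (α ^ (b + (i : ℤ)))

lemma shsum_step {C : ℝ} (hC : ∀ x, |f x| ≤ C) (N : ℕ) (b : ℤ) :
    |shsum α f N (b + 1) - shsum α f N b| ≤ 2 * C := by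
  have key : shsum α f N (b + 1) - shsum α f N b
      = f (α ^ (b + ((N : ℤ) + 1))) - f (α ^ b) := by
    have h1 : shsum α f N (b + 1) = ∑ i ∈ Finset.range (N + 1), f (α ^ (b + ((i : ℤ) + 1))) := by
      unfold shsum
      refine Finset.sum_congr rfl fun i _ => ?_
      congr 1
      ring
    have h2 : ∑ i ∈ Finset.range (N + 2), f (α ^ (b + (i : ℤ)))
        = (∑ i ∈ Finset.range (N + 1), f (α ^ (b + ((i : ℤ) + 1)))) + f (α ^ (b + (0 : ℤ))) := by
      rw [Finset.sum_range_succ' (fun i => f (α ^ (b + (i : ℤ)))) (N + 1)]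
      push_cast
      rfl
    have h3 : ∑ i ∈ Finset.range (N + 2), f (α ^ (b + (i : ℤ)))
        = shsum α f N b + f (α ^ (b + ((N : ℤ) + 1))) := by
      rw [shsum, Finset.sum_range_succ]
      push_cast
      ring_nf
    have h4 := h2.symm.trans h3
    rw [h1]
    rw [show (α : G) ^ b = α ^ (b + (0 : ℤ)) by rw [add_zero]]
    linarith [h4]
  rw [key]
  calc |f (α ^ (b + ((N : ℤ) + 1))) - f (α ^ b)|
      ≤ |f (α ^ (b + ((N : ℤ) + 1)))| + |f (α ^ b)| := abs_sub _ _
    _ ≤ C + C := add_le_add (hC _) (hC _)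
    _ = 2 * C := by ring

lemma shsum_shift {C : ℝ} (hC : ∀ x, |f x| ≤ C) (N : ℕ) :
    ∀ (j : ℕ) (b : ℤ), |shsum α f N (b + j) - shsum α f N b| ≤ 2 * C * j := by
  intro j
  induction j with
  | zero => simp
  | succ j ih =>
    intro b
    have h1 := ih (b + 1)
    have h2 := shsum_step α f hC N b
    have he : b + ((j : ℤ) + 1) = b + 1 + (j : ℤ) := by ring
    calc |shsum α f N (b + ((j : ℕ) + 1 : ℕ)) - shsum α f N b|
        = |(shsum α f N (b + 1 + (j:ℤ)) - shsum α f N (b + 1))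
            + (shsum α f N (b + 1) - shsum α f N b)| := by
          push_cast
          rw [he]
          ring_nf
      _ ≤ |shsum α f N (b + 1 + (j:ℤ)) - shsum α f N (b + 1)|
            + |shsum α f N (b + 1) - shsum α f N b| := abs_add_le _ _
      _ ≤ 2 * C * j + 2 * C := add_le_add h1 h2
      _ = 2 * C * ((j : ℕ) + 1 : ℕ) := by push_cast; ring

lemma shsum_bound {C : ℝ} (hC : ∀ x, |f x| ≤ C) (N : ℕ) (k : ℤ) :
    |shsum α f N k - shsum α f N 0| ≤ 2 * C * (k.natAbs : ℝ) := by
  rcases Int.natAbs_eq k with h | h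
  · have := shsum_shift α f hC N k.natAbs 0
    rw [zero_add, ← h] at this
    exact_mod_cast this
  · have := shsum_shift α f hC N k.natAbs k
    rw [show k + (k.natAbs : ℤ) = 0 by omega] at this
    rw [abs_sub_comm] at this
    exact_mod_cast this

/-- The invariant mean: ultrafilter limit of Cesàro averages. -/
noncomputable def mean (α : G) (f : G → ℝ) : ℝ :=
  limUnder (Filter.hyperfilter ℕ : Filter ℕ) (ces α f)

lemma hyp_le_atTop : (Filter.hyperfilter ℕ : Filter ℕ) ≤ atTop :=
  le_trans (Filter.hyperfilter_le_cofinite) (le_of_eq Nat.cofinite_eq_atTop)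

lemma ces_abs_le {C : ℝ} (hC : ∀ x, |f x| ≤ C) (N : ℕ) : |ces α f N| ≤ C := by
  have hC0 : 0 ≤ C := le_trans (abs_nonneg _) (hC 1)
  have hpos : (0:ℝ) < (N:ℝ) + 1 := by positivity
  rw [ces, abs_div, abs_of_pos hpos, div_le_iff₀ hpos]
  calc |∑ i ∈ Finset.range (N + 1), f (α ^ (i : ℤ))|
      ≤ ∑ i ∈ Finset.range (N + 1), |f (α ^ (i : ℤ))| := Finset.abs_sum_le_sum_abs _ _
    _ ≤ ∑ _i ∈ Finset.range (N + 1), C := Finset.sum_le_sum fun i _ => hC _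
    _ = (N + 1 : ℕ) * C := by rw [Finset.sum_const, Finset.card_range, nsmul_eq_mul]
    _ = C * ((N:ℝ) + 1) := by push_cast; ring

lemma tendsto_ces_mean {C : ℝ} (hC : ∀ x, |f x| ≤ C) :
    Tendsto (ces α f) (Filter.hyperfilter ℕ : Filter ℕ) (𝓝 (mean α f)) := by
  have hmem : ∀ N, ces α f N ∈ Set.Icc (-C) C := fun N => abs_le.1 (ces_abs_le α f hC N)
  have hV : (Ultrafilter.map (ces α f) (Filter.hyperfilter ℕ) : Filter ℝ)
      ≤ Filter.principal (Set.Icc (-C) C) := by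
    rw [le_principal_iff]
    exact Filter.mem_map.2 (by
      have : (Set.univ : Set ℕ) ⊆ (ces α f) ⁻¹' (Set.Icc (-C) C) := fun N _ => hmem N
      exact Filter.mem_of_superset Filter.univ_mem this)
  obtain ⟨L, _, hL⟩ := isCompact_Icc.ultrafilter_le_nhds
    (Ultrafilter.map (ces α f) (Filter.hyperfilter ℕ)) hV
  have ht : Tendsto (ces α f) (Filter.hyperfilter ℕ : Filter ℕ) (𝓝 L) := hL
  rwa [mean, ht.limUnder_eq]

end gen

lemma isAmenable_of_generator {G : Type*} [Group G] (α : G)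
    (hgen : ∀ g : G, ∃ k : ℤ, α ^ k = g) : IsAmenable G := by
  classical
  refine ⟨mean α, ?_, ?_, ?_, ?_, ?_⟩
  · -- additivity
    intro f₁ f₂ hb₁ hb₂
    obtain ⟨C₁, hC₁⟩ := (bdd_iff f₁).1 hb₁
    obtain ⟨C₂, hC₂⟩ := (bdd_iff f₂).1 hb₂
    have h₁ := tendsto_ces_mean α f₁ hC₁
    have h₂ := tendsto_ces_mean α f₂ hC₂
    have heq : ces α (f₁ + f₂) = fun N => ces α f₁ N + ces α f₂ N := by
      funext N
      rw [ces, ces, ces, ← add_div, ← Finset.sum_add_distrib]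
      rfl
    rw [mean, heq]
    exact (h₁.add h₂).limUnder_eq
  · -- scalar
    intro c f hb
    obtain ⟨C, hC⟩ := (bdd_iff f).1 hb
    have h := tendsto_ces_mean α f hC
    have heq : ces α (c • f) = fun N => c * ces α f N := by
      funext N
      rw [ces, ces, ← mul_div_assoc, Finset.mul_sum]
      simp only [Pi.smul_apply, smul_eq_mul]
    rw [mean, heq]
    exact (h.const_mul c).limUnder_eq
  · -- positivity
    intro f hb hpos
    obtain ⟨C, hC⟩ := (bdd_iff f).1 hb
    exact ge_of_tendsto' (tendsto_ces_mean α f hC) fun N => by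
      rw [ces]
      apply div_nonneg (Finset.sum_nonneg fun i _ => hpos _)
      positivity
  · -- normalization
    have heq : ces α (fun _ => (1:ℝ)) = fun _ => (1:ℝ) := by
      funext N
      rw [ces, Finset.sum_const, Finset.card_range, nsmul_eq_mul, mul_one]
      have : ((N:ℝ) + 1) ≠ 0 := by positivity
      field_simp
      push_cast
      rfl
    rw [mean, heq]
    exact tendsto_const_nhds.limUnder_eq
  · -- invariance
    intro g f hb
    obtain ⟨C, hC⟩ := (bdd_iff f).1 hb
    obtain ⟨k, hk⟩ := hgen g
    have hces : ∀ N, ces α (fun x => f (g * x)) N = shsum α f N k / (N + 1) := by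
      intro N
      rw [ces, shsum]
      congr 1
      refine Finset.sum_congr rfl fun i _ => ?_
      rw [← hk, ← zpow_add]
    have hces0 : ∀ N, ces α f N = shsum α f N 0 / (N + 1) := by
      intro N
      rw [ces, shsum]
      congr 1
      refine Finset.sum_congr rfl fun i _ => ?_
      rw [zero_add]
    have hdiff : Tendsto (fun N => ces α (fun x => f (g * x)) N - ces α f N)
        atTop (𝓝 0) := by
      apply squeeze_zero_norm
        (a := fun N : ℕ => (2 * C * (k.natAbs : ℝ)) / ((N : ℝ) + 1))
      · intro N
        rw [Real.norm_eq_abs, hces, hces0, div_sub_div_same, abs_div]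
        have hpos : (0:ℝ) < (N:ℝ) + 1 := by positivity
        rw [abs_of_pos hpos]
        exact div_le_div_of_nonneg_right (c := (N:ℝ)+1) (shsum_bound α f hC N k) hpos.le
      · have h1 := tendsto_const_div_atTop_nhds_zero_nat (2 * C * (k.natAbs : ℝ))
        have h2 : Tendsto (fun N : ℕ => N + 1) atTop atTop := tendsto_add_atTop_nat 1
        have := h1.comp h2
        refine this.congr fun N => ?_
        simp only [Function.comp_apply]
        push_cast
        rfl
    have hmean := tendsto_ces_mean α f hC
    have hdiffU := hdiff.mono_left hyp_le_atTop
    have hsum : Tendsto (fun N => ces α f N +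
        (ces α (fun x => f (g * x)) N - ces α f N))
        (Filter.hyperfilter ℕ : Filter ℕ) (𝓝 (mean α f + 0)) := hmean.add hdiffU
    have heq : (fun N => ces α f N + (ces α (fun x => f (g * x)) N - ces α f N))
        = ces α (fun x => f (g * x)) := by
      funext N; ring
    rw [heq, add_zero] at hsum
    rw [mean]
    exact hsum.limUnder_eq


section paradox

variable {Γ : Type*} [Group Γ]

lemma paradox (hA : IsAmenable Γ)
    {X : Type*} (T : Γ → X → X) (hT : ∀ γ δ x, T (γ * δ) x = T γ (T δ x)) (x0 : X)
    (C0 C1 C2 : Set X)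
    (h01 : ∀ x, x ∈ C0 → x ∉ C1) (h02 : ∀ x, x ∈ C0 → x ∉ C2) (h12 : ∀ x, x ∈ C1 → x ∉ C2)
    (g0 g1 g2 : Γ)
    (hg0 : ∀ x, x ∉ C0 → T g0 x ∈ C0) (hg1 : ∀ x, x ∉ C1 → T g1 x ∈ C1)
    (hg2 : ∀ x, x ∉ C2 → T g2 x ∈ C2) : False := by
  classical
  obtain ⟨m, madd, msmul, mpos, mone, minv⟩ := hA
  set F : Set X → Γ → ℝ := fun S γ => if T γ x0 ∈ S then 1 else 0 with hF
  have hFbd : ∀ S : Set X, Bornology.IsBounded (Set.range (F S)) := by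
    intro S
    refine (bdd_iff _).2 ⟨1, fun γ => ?_⟩
    by_cases h : T γ x0 ∈ S <;> simp [hF, h]
  have hF01 : ∀ S γ, 0 ≤ F S γ ∧ F S γ ≤ 1 := by
    intro S γ
    by_cases h : T γ x0 ∈ S <;> simp [hF, h]
  -- monotonicity of the mean
  have mmono : ∀ f h : Γ → ℝ, Bornology.IsBounded (Set.range f) →
      Bornology.IsBounded (Set.range h) → (∀ x, f x ≤ h x) → m f ≤ m h := by
    intro f h bf bh hle
    obtain ⟨Cf, hCf⟩ := (bdd_iff f).1 bf
    obtain ⟨Ch, hCh⟩ := (bdd_iff h).1 bh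
    have bdiff : Bornology.IsBounded (Set.range (h - f)) := by
      refine (bdd_iff _).2 ⟨Ch + Cf, fun x => ?_⟩
      simp only [Pi.sub_apply]
      calc |h x - f x| ≤ |h x| + |f x| := abs_sub _ _
        _ ≤ Ch + Cf := add_le_add (hCh x) (hCf x)
    have hsum : f + (h - f) = h := by funext x; simp
    have := madd f (h - f) bf bdiff
    rw [hsum] at this
    have hpos := mpos (h - f) bdiff (fun x => by simp [hle x])
    linarith
  -- each set has measure ≥ 1/2
  have half : ∀ (S : Set X) (g : Γ), (∀ x, x ∉ S → T g x ∈ S) → 1 ≤ m (F S) + m (F S) := by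
    intro S g hg
    have hinv := minv g (F S) (hFbd S)
    have hptw : ∀ γ, (1:ℝ) ≤ F S (g * γ) + F S γ := by
      intro γ
      by_cases h : T γ x0 ∈ S
      · have := (hF01 S (g * γ)).1
        simp only [hF, h, if_true]
        linarith
      · have hin : T (g * γ) x0 ∈ S := by rw [hT]; exact hg _ h
        have := (hF01 S γ).1
        simp only [hF, hin, if_true]
        linarith
    have hbd1 : Bornology.IsBounded (Set.range (fun γ => F S (g * γ))) := by
      refine (bdd_iff _).2 ⟨1, fun γ => ?_⟩
      by_cases h : T (g * γ) x0 ∈ S <;> simp [hF, h]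
    have heq : (fun γ => F S (g * γ)) + F S = fun γ => F S (g * γ) + F S γ := rfl
    have hadd := madd (fun γ => F S (g * γ)) (F S) hbd1 (hFbd S)
    have hone : m (fun _ => (1:ℝ)) ≤ m ((fun γ => F S (g * γ)) + F S) := by
      refine mmono _ _ ((bdd_iff _).2 ⟨1, by simp⟩) ?_ ?_
      · refine (bdd_iff _).2 ⟨2, fun γ => ?_⟩
        simp only [Pi.add_apply]
        have h1 := hF01 S (g * γ); have h2 := hF01 S γ
        rw [abs_le]; constructor <;> [linarith [h1.1, h2.1]; linarith [h1.2, h2.2]]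
      · intro γ
        simp only [Pi.add_apply]
        exact hptw γ
    rw [hadd, mone, hinv] at hone
    exact hone
  have half0 := half C0 g0 hg0
  have half1 := half C1 g1 hg1
  have half2 := half C2 g2 hg2
  -- total measure of three disjoint sets ≤ 1
  have hdisj : ∀ γ, F C0 γ + F C1 γ + F C2 γ ≤ 1 := by
    intro γ
    by_cases h0 : T γ x0 ∈ C0
    · have n1 := h01 _ h0; have n2 := h02 _ h0
      simp [hF, h0, n1, n2]
    · by_cases h1 : T γ x0 ∈ C1
      · have n2 := h12 _ h1
        simp [hF, h0, h1, n2]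
      · by_cases h2 : T γ x0 ∈ C2 <;> simp [hF, h0, h1, h2]
  have hb2 : Bornology.IsBounded (Set.range (F C0 + F C1)) := by
    refine (bdd_iff _).2 ⟨2, fun γ => ?_⟩
    have h1 := hF01 C0 γ; have h2 := hF01 C1 γ
    simp only [Pi.add_apply]
    rw [abs_le]; constructor <;> [linarith [h1.1, h2.1]; linarith [h1.2, h2.2]]
  have hb3 : Bornology.IsBounded (Set.range (F C0 + F C1 + F C2)) := by
    refine (bdd_iff _).2 ⟨3, fun γ => ?_⟩
    have h1 := hF01 C0 γ; have h2 := hF01 C1 γ; have h3 := hF01 C2 γ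
    simp only [Pi.add_apply]
    rw [abs_le]
    constructor <;> [linarith [h1.1, h2.1, h3.1]; linarith [h1.2, h2.2, h3.2]]
  have hsum3 : m (F C0 + F C1 + F C2) = m (F C0) + m (F C1) + m (F C2) := by
    rw [madd _ _ hb2 (hFbd C2), madd _ _ (hFbd C0) (hFbd C1)]
  have hle1 : m (F C0 + F C1 + F C2) ≤ m (fun _ => (1:ℝ)) := by
    refine mmono _ _ hb3 ((bdd_iff _).2 ⟨1, by simp⟩) ?_
    intro γ
    exact hdisj γ
  rw [hsum3, mone] at hle1
  linarith

end paradox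


section hnn

open HNNExtension Multiplicative

abbrev Gb := Multiplicative ℤ

/-- the distinguished generator of the base group -/
def gx : Gb := ofAdd 1

/-- the cyclic subgroup generated by `x^m` -/
def sA (m : ℤ) : Subgroup Gb := Subgroup.zpowers (ofAdd m)

lemma mem_sA {m : ℤ} {γ : Gb} : γ ∈ sA m ↔ m ∣ γ.toAdd := by
  rw [sA, Subgroup.mem_zpowers_iff]
  constructor
  · rintro ⟨k, rfl⟩
    rw [Int.toAdd_zpow, toAdd_ofAdd]
    exact ⟨k, rfl⟩
  · rintro ⟨k, hk⟩
    exact ⟨k, by rw [← ofAdd_toAdd γ, hk, Int.ofAdd_mul]⟩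

variable (m n : ℤ)

/-- The isomorphism `⟨x^m⟩ ≃* ⟨x^n⟩`. -/
noncomputable def φBS (hm : m ≠ 0) (hn : n ≠ 0) : sA m ≃* sA n where
  toFun a := ⟨ofAdd (Multiplicative.toAdd (a : Gb) / m * n),
    mem_sA.2 (by rw [toAdd_ofAdd]; exact dvd_mul_left _ _)⟩
  invFun b := ⟨ofAdd (Multiplicative.toAdd (b : Gb) / n * m),
    mem_sA.2 (by rw [toAdd_ofAdd]; exact dvd_mul_left _ _)⟩
  left_inv a := by
    obtain ⟨k, hk⟩ := mem_sA.1 a.2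
    ext
    simp only [toAdd_ofAdd]
    rw [hk, Int.mul_ediv_cancel_left _ hm, Int.mul_ediv_cancel _ hn,
      mul_comm k m, ← hk]
  right_inv b := by
    obtain ⟨k, hk⟩ := mem_sA.1 b.2
    ext
    simp only [toAdd_ofAdd]
    rw [hk, Int.mul_ediv_cancel_left _ hn, Int.mul_ediv_cancel _ hm,
      mul_comm k n, ← hk]
  map_mul' a b := by
    obtain ⟨k, hk⟩ := mem_sA.1 a.2
    obtain ⟨l, hl⟩ := mem_sA.1 b.2
    ext
    simp only [Subgroup.coe_mul, toAdd_mul, Submonoid.mk_mul_mk, toAdd_ofAdd]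
    rw [hk, hl, ← mul_add m k l, Int.mul_ediv_cancel_left _ hm,
      Int.mul_ediv_cancel_left _ hm, Int.mul_ediv_cancel_left _ hm]
    ring

lemma φBS_coe (hm : m ≠ 0) (hn : n ≠ 0) (a : sA m) :
    ((φBS m n hm hn a : sA n) : Gb) = ofAdd (Multiplicative.toAdd (a : Gb) / m * n) := rfl

variable (hm : m ≠ 0) (hn : n ≠ 0)

/-- The HNN model of `BS(m,n)`. -/
abbrev HBS := HNNExtension Gb (sA m) (sA n) (φBS m n hm hn)

lemma hnn_conj : (HNNExtension.t : HBS m n hm hn) * of (ofAdd m) * HNNExtension.t⁻¹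
    = of (ofAdd n) := by
  have hmem : (ofAdd m : Gb) ∈ sA m := mem_sA.2 (by rw [toAdd_ofAdd])
  have h1 := equiv_eq_conj (φ := φBS m n hm hn) ⟨ofAdd m, hmem⟩
  rw [← h1]
  congr 1
  rw [φBS_coe, toAdd_ofAdd, Int.ediv_self hm, one_mul]

/-- The canonical map `BS(m,n) →* HBS`. -/
noncomputable def ΦBS : BS m n →* HBS m n hm hn :=
  PresentedGroup.toGroup (f := fun b => if b then (HNNExtension.t : HBS m n hm hn) else of gx)
    (by
      rintro r hr
      rw [bsRels, Set.mem_singleton_iff] at hr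
      subst hr
      simp only [map_mul, map_zpow, map_inv, FreeGroup.lift_apply_of]
      norm_num
      have hxm : (of gx : HBS m n hm hn) ^ m = of (ofAdd m) := by
        rw [← map_zpow]
        congr 1
        rw [gx, ← Int.ofAdd_mul, one_mul]
      have hxn : (of gx : HBS m n hm hn) ^ n = of (ofAdd n) := by
        rw [← map_zpow]
        congr 1
        rw [gx, ← Int.ofAdd_mul, one_mul]
      rw [hxm, hxn, hnn_conj m n hm hn]
      simp)

lemma ΦBS_a : ΦBS m n hm hn (BS.a m n) = of gx := by
  rw [BS.a, ΦBS]
  exact PresentedGroup.toGroup.of _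

lemma ΦBS_t : ΦBS m n hm hn (BS.t m n) = HNNExtension.t := by
  rw [BS.t, ΦBS]
  exact PresentedGroup.toGroup.of _

/-- The relation `t a^m t⁻¹ = a^n` holds in `BS(m,n)`. -/
lemma bs_rel : BS.t m n * BS.a m n ^ m * (BS.t m n)⁻¹ = BS.a m n ^ n := by
  have h : ((PresentedGroup.mk (bsRels m n))
      (FreeGroup.of true * FreeGroup.of false ^ m * (FreeGroup.of true)⁻¹
        * (FreeGroup.of false ^ n)⁻¹)) = 1 := by
    apply (QuotientGroup.eq_one_iff _).2
    exact Subgroup.subset_normalClosure (by rw [bsRels]; exact Set.mem_singleton _)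
  rw [map_mul, map_mul, map_mul, map_inv, map_inv, map_zpow, map_zpow] at h
  have ha : (PresentedGroup.mk (bsRels m n)) (FreeGroup.of false) = BS.a m n := rfl
  have ht : (PresentedGroup.mk (bsRels m n)) (FreeGroup.of true) = BS.t m n := rfl
  rw [ha, ht, mul_inv_eq_one] at h
  exact h

lemma bs_rel_pow (k : ℤ) : BS.t m n * BS.a m n ^ (m * k) * (BS.t m n)⁻¹
    = BS.a m n ^ (n * k) := by
  have hconj := map_zpow (MulAut.conj (BS.t m n)) (BS.a m n ^ m) k
  simp only [MulAut.conj_apply] at hconj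
  rw [bs_rel m n] at hconj
  rw [zpow_mul, zpow_mul]
  exact hconj

/-- The inverse map `HBS →* BS(m,n)`. -/
noncomputable def ΨBS : HBS m n hm hn →* BS m n :=
  HNNExtension.lift (zpowersHom (BS m n) (BS.a m n)) (BS.t m n) (by
    rintro ⟨γ, hγ⟩
    obtain ⟨k, hk⟩ := mem_sA.1 hγ
    simp only [zpowersHom_apply]
    rw [φBS_coe, toAdd_ofAdd, hk, Int.mul_ediv_cancel_left _ hm]
    have := bs_rel_pow m n k
    rw [mul_inv_eq_iff_eq_mul] at this
    rw [mul_comm k n]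
    exact this)

lemma ΨΦ_a : ΨBS m n hm hn (ΦBS m n hm hn (BS.a m n)) = BS.a m n := by
  rw [ΦBS_a, ΨBS]
  rw [HNNExtension.lift_of]
  rw [zpowersHom_apply]
  rw [gx, toAdd_ofAdd, zpow_one]

lemma ΨΦ_t : ΨBS m n hm hn (ΦBS m n hm hn (BS.t m n)) = BS.t m n := by
  rw [ΦBS_t, ΨBS, HNNExtension.lift_t]

lemma ΨΦ_id : ∀ g : BS m n, ΨBS m n hm hn (ΦBS m n hm hn g) = g := by
  intro g
  have : (ΨBS m n hm hn).comp (ΦBS m n hm hn) = MonoidHom.id (BS m n) := by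
    apply PresentedGroup.ext
    intro b
    cases b
    · exact ΨΦ_a m n hm hn
    · exact ΨΦ_t m n hm hn
  calc ΨBS m n hm hn (ΦBS m n hm hn g)
      = ((ΨBS m n hm hn).comp (ΦBS m n hm hn)) g := rfl
    _ = g := by rw [this]; rfl

/-- If `Φ g` is in the image of the base group then `g ∈ ⟨a⟩`. -/
lemma mem_zpowers_of_of (g : BS m n)
    (h : ΦBS m n hm hn g ∈ (of : Gb →* HBS m n hm hn).range) :
    g ∈ Subgroup.zpowers (BS.a m n) := by
  obtain ⟨γ, hγ⟩ := h
  refine ⟨Multiplicative.toAdd γ, ?_⟩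
  have := congrArg (ΨBS m n hm hn) hγ
  rw [ΨΦ_id] at this
  rw [← this, ΨBS, HNNExtension.lift_of, zpowersHom_apply]

end hnn


section words

open HNNExtension HNNExtension.NormalWord Multiplicative

variable (m n : ℤ) (hm : m ≠ 0) (hn : n ≠ 0)

/-- The chain relation on letters. -/
abbrev relW : (ℤˣ × Gb) → (ℤˣ × Gb) → Prop :=
  fun a b => a.2 ∈ toSubgroup (sA m) (sA n) a.1 → a.1 = b.1

/-- product of a list of letters -/
noncomputable def pl (L : List (ℤˣ × Gb)) : HBS m n hm hn :=
  (L.map fun x => (HNNExtension.t : HBS m n hm hn) ^ (x.1 : ℤ) * of x.2).prod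

lemma pl_nil : pl m n hm hn [] = 1 := rfl

lemma pl_cons (p : ℤˣ × Gb) (L : List (ℤˣ × Gb)) :
    pl m n hm hn (p :: L)
      = (HNNExtension.t : HBS m n hm hn) ^ (p.1 : ℤ) * of p.2 * pl m n hm hn L := by
  rw [pl, List.map_cons, List.prod_cons]; rfl

lemma pl_append (L1 L2 : List (ℤˣ × Gb)) :
    pl m n hm hn (L1 ++ L2) = pl m n hm hn L1 * pl m n hm hn L2 := by
  rw [pl, List.map_append, List.prod_append]; rfl

lemma prod_eq (w : ReducedWord Gb (sA m) (sA n)) :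
    w.prod (φBS m n hm hn) = of w.head * pl m n hm hn w.toList := rfl

/-- the key ping-pong sets -/
def SetB (u : ℤˣ) (c : Gb) : Set (HBS m n hm hn) :=
  { h | ∃ w : ReducedWord Gb (sA m) (sA n), w.prod (φBS m n hm hn) = h ∧
      w.toList.head?.map Prod.fst = some u ∧
      c⁻¹ * w.head ∈ toSubgroup (sA m) (sA n) (-u) }

lemma SetB_transfer {u : ℤˣ} {c : Gb} {h : HBS m n hm hn} (hmem : h ∈ SetB m n hm hn u c)
    (w : ReducedWord Gb (sA m) (sA n)) (hw : w.prod (φBS m n hm hn) = h) :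
    w.toList.head?.map Prod.fst = some u ∧
      c⁻¹ * w.head ∈ toSubgroup (sA m) (sA n) (-u) := by
  obtain ⟨w₀, hw₀, hfst, hclass⟩ := hmem
  have heq := ReducedWord.map_fst_eq_and_of_prod_eq (φBS m n hm hn)
    (w₁ := w₀) (w₂ := w) (by rw [hw₀, hw])
  have hfst' : w.toList.head?.map Prod.fst = some u := by
    rw [← List.head?_map, ← heq.1, List.head?_map, hfst]
  refine ⟨hfst', ?_⟩
  have h2 := heq.2 u (Option.mem_def.2 hfst)
  have : c⁻¹ * w.head = (c⁻¹ * w₀.head) * (w₀.head⁻¹ * w.head) := by group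
  rw [this]
  exact mul_mem hclass h2

lemma SetB_disjoint {u u' : ℤˣ} {c c' : Gb} {h : HBS m n hm hn}
    (h1 : h ∈ SetB m n hm hn u c) (h2 : h ∈ SetB m n hm hn u' c') :
    u = u' ∧ c'⁻¹ * c ∈ toSubgroup (sA m) (sA n) (-u) := by
  obtain ⟨w₀, hw₀, hfst, hclass⟩ := h1
  have t2 := SetB_transfer m n hm hn h2 w₀ hw₀
  have huu : u = u' := Option.some_inj.1 (hfst.symm.trans t2.1)
  subst huu
  refine ⟨rfl, ?_⟩
  have : c'⁻¹ * c = (c'⁻¹ * w₀.head) * (c⁻¹ * w₀.head)⁻¹ := by group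
  rw [this]
  exact mul_mem t2.2 (inv_mem hclass)

/-- elements of the base group are in no `SetB` -/
lemma SetB_of_range {u : ℤˣ} {c : Gb} {γ : Gb} :
    (of γ : HBS m n hm hn) ∉ SetB m n hm hn u c := by
  intro hmem
  have := SetB_transfer m n hm hn hmem
    { head := γ, toList := [], chain := List.isChain_nil }
    (by rw [prod_eq, pl_nil, mul_one])
  simp at this

lemma units_dichotomy (u v : ℤˣ) : u = v ∨ u = -v := by
  rcases Int.units_eq_one_or u with rfl | rfl <;>
    rcases Int.units_eq_one_or v with rfl | rfl <;> simp

lemma units_ne_neg (u : ℤˣ) : u ≠ -u := by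
  rcases Int.units_eq_one_or u with rfl | rfl <;> decide

/-- the core construction: a reduced word for `w x w⁻¹ β`. -/
def cw : Gb → List (ℤˣ × Gb) → Gb → Gb × List (ℤˣ × Gb)
  | γ, [], β => (γ * gx * γ⁻¹ * β, [])
  | γ, (u, γ') :: T, β =>
    (γ, (u, (cw γ' T 1).1) :: ((cw γ' T 1).2 ++ [(-u, γ⁻¹ * β)]))

lemma cw_fst_nil (γ β : Gb) : (cw γ [] β).1 = γ * gx * γ⁻¹ * β := rfl

lemma cw_snd_nil (γ β : Gb) : (cw γ [] β).2 = [] := rfl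

lemma cw_fst_cons (γ β γ' : Gb) (u : ℤˣ) (T : List (ℤˣ × Gb)) :
    (cw γ ((u, γ') :: T) β).1 = γ := rfl

lemma cw_snd_cons (γ β γ' : Gb) (u : ℤˣ) (T : List (ℤˣ × Gb)) :
    (cw γ ((u, γ') :: T) β).2
      = (u, (cw γ' T 1).1) :: ((cw γ' T 1).2 ++ [(-u, γ⁻¹ * β)]) := rfl

lemma cw_getLast (γ β γ' : Gb) (u : ℤˣ) (T : List (ℤˣ × Gb)) :
    ((cw γ ((u, γ') :: T) β).2).getLast? = some (-u, γ⁻¹ * β) := by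
  rw [cw_snd_cons,
    show (u, (cw γ' T 1).1) :: ((cw γ' T 1).2 ++ [(-u, γ⁻¹ * β)])
      = ((u, (cw γ' T 1).1) :: (cw γ' T 1).2) ++ [(-u, γ⁻¹ * β)] by simp,
    List.getLast?_concat]

lemma cw_prod (L : List (ℤˣ × Gb)) : ∀ (γ β : Gb),
    (of (cw γ L β).1 : HBS m n hm hn) * pl m n hm hn (cw γ L β).2
      = (of γ * pl m n hm hn L) * of gx * (of γ * pl m n hm hn L)⁻¹ * of β := by
  induction L with
  | nil =>
    intro γ β
    rw [cw_fst_nil, cw_snd_nil, pl_nil]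
    simp only [map_mul, map_inv, mul_one]
  | cons p T ih =>
    intro γ β
    obtain ⟨u, γ'⟩ := p
    have ihp := ih γ' 1
    rw [cw_fst_cons, cw_snd_cons, pl_cons, pl_cons, pl_append, pl_cons, pl_nil]
    simp only [map_mul, map_inv, map_one, mul_one] at ihp ⊢
    have hneg : ((-u : ℤˣ) : ℤ) = -(u : ℤ) := by simp
    rw [hneg, zpow_neg]
    have hI : pl m n hm hn (cw γ' T 1).2
        = (of (cw γ' T 1).1 : HBS m n hm hn)⁻¹
          * (of γ' * pl m n hm hn T * of gx * (of γ' * pl m n hm hn T)⁻¹) := by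
      rw [← ihp]; group
    rw [hI]
    group

lemma cw_chain (hx1 : ∀ u : ℤˣ, gx ∉ toSubgroup (sA m) (sA n) u) :
    ∀ (L : List (ℤˣ × Gb)) (γ β : Gb), L.Chain' (relW m n) →
      ((cw γ L β).2).Chain' (relW m n) := by
  intro L
  induction L with
  | nil => intro γ β _; rw [cw_snd_nil]; exact List.isChain_nil
  | cons p T ih =>
    intro γ β hchain
    obtain ⟨u, γ'⟩ := p
    rw [cw_snd_cons]
    rw [List.Chain', List.isChain_cons]
    constructor
    · intro b hb hmem
      cases T with
      | nil =>
        exfalso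
        have h1 : (cw γ' ([] : List (ℤˣ × Gb)) 1).1 = gx := by
          rw [cw_fst_nil, mul_one, mul_comm γ' gx, mul_inv_cancel_right]
        rw [h1] at hmem
        exact hx1 u hmem
      | cons q T' =>
        -- b is the head of `(cw γ' (q::T') 1).2 ++ [(-u, γ⁻¹ * β)]`
        rw [cw_snd_cons] at hb
        simp only [List.cons_append, List.head?_cons, Option.mem_def, Option.some_inj] at hb
        rw [cw_fst_cons] at hmem
        have hrel := (List.isChain_cons_cons.1 hchain).1
        have := hrel hmem
        rw [← hb]
        exact this
    · rw [List.isChain_append]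
      refine ⟨ih γ' 1 (List.IsChain.tail hchain), List.isChain_singleton _, ?_⟩
      intro z hz y hy
      simp only [List.head?_cons, Option.mem_def, Option.some_inj] at hy
      cases T with
      | nil =>
        rw [cw_snd_nil] at hz
        simp at hz
      | cons q T' =>
        obtain ⟨v, δ⟩ := q
        rw [cw_getLast] at hz
        simp only [Option.mem_def, Option.some_inj] at hz
        subst hz
        intro hzmem
        rw [← hy]
        show -v = -u
        rcases units_dichotomy v u with rfl | rfl
        · rfl
        · exfalso
          simp only [mul_one, inv_mem_iff, neg_neg] at hzmem
          have hrel := (List.isChain_cons_cons.1 hchain).1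
          have := hrel hzmem
          exact absurd this (units_ne_neg u)

end words


section ping

open HNNExtension HNNExtension.NormalWord Multiplicative

variable (m n : ℤ) (hm : m ≠ 0) (hn : n ≠ 0)

lemma gx_not_mem (hm3 : 3 ≤ |m|) (hn3 : 3 ≤ |n|) (u : ℤˣ) :
    gx ∉ toSubgroup (sA m) (sA n) u := by
  rcases Int.units_eq_one_or u with rfl | rfl
  · intro h
    have : m ∣ Multiplicative.toAdd gx := mem_sA.1 h
    rw [gx, toAdd_ofAdd] at this
    have := Int.le_of_dvd (by norm_num) ((abs_dvd _ _).2 this)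
    omega
  · intro h
    have : n ∣ Multiplicative.toAdd gx := mem_sA.1 h
    rw [gx, toAdd_ofAdd] at this
    have := Int.le_of_dvd (by norm_num) ((abs_dvd _ _).2 this)
    omega

lemma mem_toSubgroup_dvd {u : ℤˣ} {γ : Gb} (h : γ ∈ toSubgroup (sA m) (sA n) u) :
    m ∣ Multiplicative.toAdd γ ∨ n ∣ Multiplicative.toAdd γ := by
  rcases Int.units_eq_one_or u with rfl | rfl
  · exact Or.inl (mem_sA.1 h)
  · exact Or.inr (mem_sA.1 h)

lemma ping (hm3 : 3 ≤ |m|) (hn3 : 3 ≤ |n|)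
    (w : ReducedWord Gb (sA m) (sA n)) (u1 : ℤˣ) (γ1 : Gb) (L1 : List (ℤˣ × Gb))
    (hcons : w.toList = (u1, γ1) :: L1) (j : ℤ) (y : HBS m n hm hn)
    (hy : y ∉ SetB m n hm hn u1 (gx ^ j * w.head)) :
    of (gx ^ j) * (w.prod (φBS m n hm hn)) * of gx * (w.prod (φBS m n hm hn))⁻¹
      * of (gx ^ (-j)) * y ∈ SetB m n hm hn u1 (gx ^ j * w.head) := by
  classical
  obtain ⟨d⟩ := NormalWord.TransversalPair.nonempty Gb (sA m) (sA n)
  set wy : ReducedWord Gb (sA m) (sA n)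
    := ((NormalWord.equiv (φBS m n hm hn) d) y).toReducedWord with hwy
  have hwyprod : wy.prod (φBS m n hm hn) = y :=
    (NormalWord.equiv (φBS m n hm hn) d).symm_apply_apply y
  set β : Gb := gx ^ (-j) * wy.head with hβ
  -- the chain condition of the concatenated word
  have hchain : ((cw w.head w.toList β).2 ++ wy.toList).Chain' (relW m n) := by
    rw [List.Chain', List.isChain_append]
    refine ⟨cw_chain m n (gx_not_mem m n hm3 hn3) w.toList w.head β w.chain,
      wy.chain, ?_⟩
    intro z hz y' hy'
    rw [hcons, cw_getLast] at hz
    simp only [Option.mem_def, Option.some_inj] at hz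
    subst hz
    intro hzmem
    show -u1 = y'.1
    rcases units_dichotomy y'.1 u1 with h1 | h1
    · exfalso
      apply hy
      refine ⟨wy, hwyprod, ?_, ?_⟩
      · rw [Option.mem_def.1 hy', Option.map_some, h1]
      · have heq : (gx ^ j * w.head)⁻¹ * wy.head = w.head⁻¹ * β := by
          rw [hβ, mul_inv_rev, mul_assoc, ← zpow_neg]
        rw [heq]
        exact hzmem
    · exact h1.symm
  -- the witness word
  refine ⟨⟨gx ^ j * w.head, (cw w.head w.toList β).2 ++ wy.toList, hchain⟩, ?_, ?_, ?_⟩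
  · -- the product is the required element
    show (of (gx ^ j * w.head) : HBS m n hm hn)
        * pl m n hm hn ((cw w.head w.toList β).2 ++ wy.toList) = _
    have hfst : (cw w.head w.toList β).1 = w.head := by rw [hcons, cw_fst_cons]
    have hcw := cw_prod m n hm hn w.toList w.head β
    rw [hfst] at hcw
    have hpl : pl m n hm hn (cw w.head w.toList β).2
        = (of w.head : HBS m n hm hn)⁻¹ * ((of w.head * pl m n hm hn w.toList) * of gx
          * (of w.head * pl m n hm hn w.toList)⁻¹ * of β) := by
      rw [← hcw]; group
    rw [pl_append, hpl, map_mul, hβ, map_mul]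
    conv_rhs => rw [← hwyprod]
    rw [prod_eq m n hm hn w, prod_eq m n hm hn wy]
    group
  · -- first letter
    show (((cw w.head w.toList β).2 ++ wy.toList).head?).map Prod.fst = some u1
    rw [hcons, cw_snd_cons]
    simp
  · -- head class
    show (gx ^ j * w.head)⁻¹ * (gx ^ j * w.head) ∈ toSubgroup (sA m) (sA n) (-u1)
    rw [inv_mul_cancel]
    exact one_mem _

end ping


section final

open HNNExtension HNNExtension.NormalWord Multiplicative

lemma class_contra (m n : ℤ) (hm3 : 3 ≤ |m|) (hn3 : 3 ≤ |n|) {u1 : ℤˣ} {i i' : ℤ} {γ0 : Gb}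
    (hne : i ≠ i') (hsmall : |i - i'| ≤ 2)
    (hmem : (gx ^ i' * γ0)⁻¹ * (gx ^ i * γ0) ∈ toSubgroup (sA m) (sA n) (-u1)) : False := by
  have hel : (gx ^ i' * γ0)⁻¹ * (gx ^ i * γ0) = gx ^ (i - i') := by
    apply Multiplicative.toAdd.injective
    simp only [toAdd_mul, toAdd_inv, Int.toAdd_zpow, gx, toAdd_ofAdd]
    ring
  rw [hel] at hmem
  have htoAdd : Multiplicative.toAdd (gx ^ (i - i')) = i - i' := by
    simp [Int.toAdd_zpow, gx]
  have hpos : 0 < |i - i'| := abs_pos.2 (by omega)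
  rcases mem_toSubgroup_dvd m n hmem with h | h
  · rw [htoAdd] at h
    have := Int.le_of_dvd hpos ((abs_dvd _ _).2 ((dvd_abs _ _).2 h))
    omega
  · rw [htoAdd] at h
    have := Int.le_of_dvd hpos ((abs_dvd _ _).2 ((dvd_abs _ _).2 h))
    omega

end final

end BSwork

theorem maximal_amenable_cyclic_in_BS (m n : ℤ) (hm : 3 ≤ |m|) (hn : 3 ≤ |n|) :
    MaximalAmenable (Subgroup.zpowers (BS.a m n)) := by
  classical
  have hm0 : m ≠ 0 := by rintro rfl; simp at hm
  have hn0 : n ≠ 0 := by rintro rfl; simp at hn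
  constructor
  · -- amenability of ⟨a⟩
    apply BSwork.isAmenable_of_generator
      (α := (⟨BS.a m n, Subgroup.mem_zpowers _⟩ : Subgroup.zpowers (BS.a m n)))
    rintro ⟨g, hg⟩
    obtain ⟨k, hk⟩ := Subgroup.mem_zpowers_iff.1 hg
    refine ⟨k, ?_⟩
    ext
    rw [SubgroupClass.coe_zpow]
    exact hk
  · -- maximality
    intro K hK hle
    by_contra hne
    have hnotle : ¬ K ≤ Subgroup.zpowers (BS.a m n) := fun h => hne (le_antisymm h hle)
    obtain ⟨g, hgK, hgn⟩ := SetLike.not_le_iff_exists.1 hnotle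
    set Φ := BSwork.ΦBS m n hm0 hn0 with hΦdef
    have hPnot : Φ g ∉ (HNNExtension.of : BSwork.Gb →* BSwork.HBS m n hm0 hn0).range :=
      fun h => hgn (BSwork.mem_zpowers_of_of m n hm0 hn0 g h)
    obtain ⟨d⟩ := HNNExtension.NormalWord.TransversalPair.nonempty
      BSwork.Gb (BSwork.sA m) (BSwork.sA n)
    set w := ((HNNExtension.NormalWord.equiv (BSwork.φBS m n hm0 hn0) d)
      (Φ g)).toReducedWord with hwdef
    have hwprod : w.prod (BSwork.φBS m n hm0 hn0) = Φ g :=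
      (HNNExtension.NormalWord.equiv (BSwork.φBS m n hm0 hn0) d).symm_apply_apply (Φ g)
    obtain ⟨u1, γ1, L1, hcons⟩ : ∃ u1 γ1 L1, w.toList = (u1, γ1) :: L1 := by
      cases hL : w.toList with
      | nil =>
        exfalso
        apply hPnot
        exact ⟨w.head, by rw [← hwprod, BSwork.prod_eq, hL, BSwork.pl_nil, mul_one]⟩
      | cons p L1 => exact ⟨p.1, p.2, L1, by rw [Prod.mk.eta]⟩

    have haK : BS.a m n ∈ K := hle (Subgroup.mem_zpowers _)
    set κ : ℤ → BS m n := fun j =>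
      BS.a m n ^ j * g * BS.a m n * g⁻¹ * BS.a m n ^ (-j) with hκ
    have hκK : ∀ j, κ j ∈ K := fun j =>
      mul_mem (mul_mem (mul_mem (mul_mem (zpow_mem haK j) hgK) haK) (inv_mem hgK))
        (zpow_mem haK (-j))
    have hΦκ : ∀ j, Φ (κ j) = HNNExtension.of (BSwork.gx ^ j) * Φ g
        * HNNExtension.of BSwork.gx * (Φ g)⁻¹ * HNNExtension.of (BSwork.gx ^ (-j)) := by
      intro j
      have ha : Φ (BS.a m n) = HNNExtension.of BSwork.gx := BSwork.ΦBS_a m n hm0 hn0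
      simp only [hκ, map_mul, map_inv, map_zpow, ha]
    set C : ℤ → Set (BSwork.HBS m n hm0 hn0) := fun j =>
      BSwork.SetB m n hm0 hn0 u1 (BSwork.gx ^ j * w.head) with hC
    have hping : ∀ j, ∀ y : BSwork.HBS m n hm0 hn0, y ∉ C j → Φ (κ j) * y ∈ C j := by
      intro j y hy
      rw [hΦκ j, ← hwprod]
      exact BSwork.ping m n hm0 hn0 hm hn w u1 γ1 L1 hcons j y hy
    have hdisj : ∀ i i' : ℤ, i ≠ i' → |i - i'| ≤ 2 → ∀ x, x ∈ C i → x ∉ C i' := by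
      intro i i' hne' hsmall x hxi hxi'
      have hd := BSwork.SetB_disjoint m n hm0 hn0 hxi hxi'
      exact BSwork.class_contra m n hm hn hne' hsmall hd.2
    exact BSwork.paradox hK (fun (κ' : K) (x : BSwork.HBS m n hm0 hn0) => Φ ↑κ' * x)
      (by
        intro γ δ x
        show Φ ↑(γ * δ) * x = Φ ↑γ * (Φ ↑δ * x)
        rw [Subgroup.coe_mul, map_mul, mul_assoc]) 1
      (C 0) (C 1) (C 2)
      (hdisj 0 1 (by norm_num) (by norm_num))
      (hdisj 0 2 (by norm_num) (by norm_num))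
      (hdisj 1 2 (by norm_num) (by norm_num))
      ⟨κ 0, hκK 0⟩ ⟨κ 1, hκK 1⟩ ⟨κ 2, hκK 2⟩
      (hping 0) (hping 1) (hping 2)
end

section
/- Let m and n be integers with |m| ≥ 3 and |n| ≥ 3, and let G = BS(m,n). For every g ∈ G with g ∉ ⟨a⟩, there exist integers i and j such that, setting h = a^i g a^j, the two elements h a h^{-1} a and a h a h^{-1} freely generate a free subgroup of rank 2 in G. -/
/-- `x` and `y` freely generate a free subgroup of rank 2: the homomorphism from the
free group on two generators sending the generators to `x` and `y` is injective. -/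
def FreelyGenerateF2 {G : Type*} [Group G] (x y : G) : Prop :=
  Function.Injective (FreeGroup.lift (fun b : Bool => if b then x else y) : FreeGroup Bool →* G)

set_option linter.unusedSectionVars false

open HNNExtension HNNExtension.NormalWord Subgroup List Multiplicative

namespace PingPong


def lead (c : Bool × Bool) : ℤ :=
  if c.2 then (if c.1 then 0 else 1) else (if c.1 then -1 else 0)

def trail (c : Bool × Bool) : ℤ :=
  if c.2 then (if c.1 then 1 else 0) else (if c.1 then 0 else -1)

def inner (c : Bool × Bool) : ℤ := if c.2 then 1 else -1

/-- Reducedness of a word over the two-letter alphabet. -/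
def Reduced (l : List (Bool × Bool)) : Prop :=
  List.Chain' (fun p q : Bool × Bool => p.1 = q.1 → p.2 = q.2) l

lemma aux_inner (c : Bool × Bool) : inner c = 1 ∨ inner c = -1 := by
  rcases c with ⟨b, s⟩; cases s <;> simp [inner]

lemma aux_abs_d (c c' : Bool × Bool) : |trail c + lead c'| ≤ 2 := by
  revert c c'; decide

lemma aux_merge (c c' : Bool × Bool) (h : c.1 = c'.1 → c.2 = c'.2)
    (hm : trail c + lead c' = 0) :
    inner c + inner c' = 2 ∨ inner c + inner c' = -2 := by
  revert h hm; revert c c'; decide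

lemma aux_no_double_merge (c c' c'' : Bool × Bool) (h1 : c.1 = c'.1 → c.2 = c'.2)
    (h2 : c'.1 = c''.1 → c'.2 = c''.2) (hm : trail c + lead c' = 0) :
    trail c' + lead c'' ≠ 0 := by
  revert h1 h2 hm; revert c c' c''; decide

section Core

variable {G : Type*} [Group G] {A B : Subgroup G} (φ : A ≃* B) (α : G)

/-- The chain predicate for reduced words in an HNN extension. -/
def P (A B : Subgroup G) : ℤˣ × G → ℤˣ × G → Prop :=
  fun p q => p.2 ∈ toSubgroup A B p.1 → p.1 = q.1

/-- The product in the HNN extension of a list of pairs. -/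
def listProd (M : List (ℤˣ × G)) : HNNExtension G A B φ :=
  (M.map fun x : ℤˣ × G => (t ^ (x.1 : ℤ) * HNNExtension.of x.2 : HNNExtension G A B φ)).prod

lemma listProd_append (M N : List (ℤˣ × G)) :
    listProd φ (M ++ N) = listProd φ M * listProd φ N := by
  simp [listProd]

lemma listProd_singleton (u : ℤˣ) (g : G) :
    listProd φ [(u, g)] = t ^ (u : ℤ) * of g := by
  simp [listProd]

/-- `invAux c L` is the list representing `(prod L)⁻¹ * of c`, roughly. -/
def invAux : G → List (ℤˣ × G) → List (ℤˣ × G)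
  | _, [] => []
  | c, (u, g) :: T => invAux g⁻¹ T ++ [(-u, c)]

lemma invAux_ne_nil (c : G) (L : List (ℤˣ × G)) (h : L ≠ []) : invAux c L ≠ [] := by
  match L with
  | (u, g) :: T => simp [invAux]

lemma invAux_getLast? (c : G) (L : List (ℤˣ × G)) (h : L ≠ []) :
    (invAux c L).getLast? = some (-(L.head h).1, c) := by
  match L with
  | (u, g) :: T => simp [invAux, List.getLast?_concat]

lemma listProd_invAux (c : G) : ∀ (L : List (ℤˣ × G)) (h : L ≠ []),
    listProd φ (invAux c L) = of ((L.getLast h).2) * (listProd φ L)⁻¹ * of c := by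
  intro L
  induction L generalizing c with
  | nil => intro h; simp at h
  | cons p T ih =>
    intro h
    rcases p with ⟨u, g⟩
    rcases eq_or_ne T [] with rfl | hT
    · simp [invAux, listProd, mul_assoc]
    · rw [show ((u,g) :: T).getLast h = T.getLast hT from List.getLast_cons hT]
      rw [invAux, listProd_append, ih g⁻¹ hT, listProd_singleton]
      rw [show listProd φ ((u,g) :: T) = t ^ (u:ℤ) * of g * listProd φ T by
        simp [listProd, mul_assoc]]
      simp [mul_assoc, zpow_neg]

lemma chain'_invAux (c : G) : ∀ (L : List (ℤˣ × G)), L.Chain' (P A B) →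
    List.Chain' (P A B) (invAux c L) := by
  intro L
  induction L generalizing c with
  | nil => intro _; simp [invAux, List.Chain', List.isChain_nil]
  | cons p T ih =>
    intro hchain
    rcases p with ⟨u, g⟩
    rw [invAux]
    rcases eq_or_ne T [] with rfl | hT
    · simp [invAux, List.Chain', List.isChain_singleton]
    · simp only [List.Chain']; rw [List.isChain_append]
      refine ⟨ih g⁻¹ (List.isChain_cons.1 hchain).2, List.isChain_singleton _, ?_⟩
      intro x hx y hy
      rw [invAux_getLast? g⁻¹ T hT, Option.mem_def, Option.some_inj] at hx
      subst hx
      simp only [List.head?_cons, Option.mem_def, Option.some_inj] at hy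
      subst hy
      -- P (-(T.head).1, g⁻¹) (-u, c)
      intro hmem
      have hP : P A B (u, g) (T.head hT) := by
        have := (List.isChain_cons.1 hchain).1 (T.head hT) (List.head?_eq_head hT)
        exact this
      by_cases huv : u = (T.head hT).1
      · rw [huv]
      · exfalso
        have hneg : (T.head hT).1 = -u := by
          rcases Int.units_eq_one_or u with rfl | rfl <;>
            rcases Int.units_eq_one_or (T.head hT).1 with h1 | h1 <;> simp_all
        rw [hneg, neg_neg] at hmem
        exact huv (hP (by simpa using inv_mem_iff.1 (by exact hmem)))

section Blocks

variable (L : List (ℤˣ × G)) (uk : ℤˣ)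

/-- The block `h * a^s * h⁻¹ * a^e` as a list of pairs. -/
def Bd (s e : ℤ) : List (ℤˣ × G) :=
  (L.dropLast ++ [(uk, α ^ s)]) ++ invAux (α ^ e) L

/-- Build the reduced word list for a reduced word in the letters `x, y, x⁻¹, y⁻¹`. -/
def mkW : List (Bool × Bool) → List (ℤˣ × G)
  | [] => []
  | [c] => Bd α L uk (inner c) (trail c)
  | [c, c'] =>
      if trail c + lead c' = 0 then Bd α L uk (inner c + inner c') (trail c')
      else Bd α L uk (inner c) (trail c + lead c') ++ mkW [c']
  | c :: c' :: c'' :: rest =>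
      if trail c + lead c' = 0 then
        Bd α L uk (inner c + inner c') (trail c' + lead c'') ++ mkW (c'' :: rest)
      else Bd α L uk (inner c) (trail c + lead c') ++ mkW (c' :: c'' :: rest)

variable (hL : L ≠ []) (hlast : L.getLast hL = (uk, 1))

lemma Bd_ne_nil (s e : ℤ) : Bd α L uk s e ≠ [] := by
  simp [Bd]

lemma mkW_ne_nil : ∀ (l : List (Bool × Bool)), l ≠ [] → mkW α L uk l ≠ []
  | [c], _ => by rw [mkW]; exact Bd_ne_nil α L uk _ _
  | [c, c'], _ => by
      rw [mkW]
      split_ifs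
      · exact Bd_ne_nil α L uk _ _
      · simp [Bd]
  | c :: c' :: c'' :: rest, _ => by
      rw [mkW]; split_ifs <;> simp [Bd]

include hL hlast

lemma listProd_Bd (s e : ℤ) :
    listProd φ (Bd α L uk s e) =
      listProd φ L * of (α ^ s) * (listProd φ L)⁻¹ * of (α ^ e) := by
  have hdec : L.dropLast ++ [(uk, (1 : G))] = L := by
    conv_rhs => rw [← List.dropLast_append_getLast hL, hlast]
  have h1 : listProd φ L = listProd φ L.dropLast * t ^ (uk : ℤ) := by
    conv_lhs => rw [← hdec]
    simp [listProd_append, listProd_singleton]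
  rw [Bd, listProd_append, listProd_append, listProd_singleton,
    listProd_invAux φ _ L hL, hlast, h1]
  simp only [map_one, one_mul]
  group

lemma getLast?_Bd (s e : ℤ) :
    ∀ p ∈ (Bd α L uk s e).getLast?, p.2 = α ^ e := by
  intro p hp
  rw [Bd, List.getLast?_append_of_ne_nil _ (invAux_ne_nil _ L hL), invAux_getLast? _ L hL] at hp
  simp only [Option.mem_def, Option.some_inj] at hp
  rw [← hp]

variable (hα : ∀ s : ℤ, s ≠ 0 → |s| ≤ 2 → ∀ u : ℤˣ, α ^ s ∉ toSubgroup A B u)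
variable (hchain : L.Chain' (P A B))

include hα hchain

lemma chain_Bd (s e : ℤ) (hs : s ≠ 0) (hs2 : |s| ≤ 2) :
    List.Chain' (P A B) (Bd α L uk s e) := by
  have hdec : L.dropLast ++ [(uk, (1 : G))] = L := by
    conv_rhs => rw [← List.dropLast_append_getLast hL, hlast]
  rw [← hdec] at hchain
  simp only [List.Chain'] at hchain; rw [List.isChain_append] at hchain
  rw [Bd]; simp only [List.Chain']; rw [List.isChain_append]
  refine ⟨?_, chain'_invAux _ L (by rw [← hdec]; simp only [List.Chain']; rw [List.isChain_append]; exact hchain), ?_⟩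
  · rw [List.isChain_append]
    refine ⟨hchain.1, List.isChain_singleton _, ?_⟩
    intro x hx y hy
    simp only [List.head?_cons, Option.mem_def, Option.some_inj] at hy
    subst hy
    intro hmem
    exact hchain.2.2 x hx (uk, 1) (by simp) hmem
  · intro x hx y _
    rw [List.getLast?_concat] at hx
    simp only [Option.mem_def, Option.some_inj] at hx
    subst hx
    intro hmem
    exact absurd hmem (hα s hs hs2 uk)

lemma P_of_getLast_Bd (s e : ℤ) (he : e ≠ 0) (he2 : |e| ≤ 2) :
    ∀ p ∈ (Bd α L uk s e).getLast?, ∀ q : ℤˣ × G, P A B p q := by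
  intro p hp q hmem
  rw [getLast?_Bd α L uk hL hlast s e p hp] at hmem
  exact absurd hmem (hα e he he2 p.1)

lemma chain_mkW : ∀ (l : List (Bool × Bool)), Reduced l →
    List.Chain' (P A B) (mkW α L uk l)
  | [] => fun _ => by rw [mkW]; exact List.isChain_nil
  | [c] => fun _ => by
      rw [mkW]
      rcases aux_inner c with h | h <;>
        exact chain_Bd α L uk hL hlast hα hchain _ _ (by omega) (by rw [h]; norm_num)
  | [c, c'] => fun hred => by
      have hR : c.1 = c'.1 → c.2 = c'.2 := (List.isChain_cons_cons.1 hred).1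
      rw [mkW]
      split_ifs with hm
      · rcases aux_merge c c' hR hm with h | h <;>
          exact chain_Bd α L uk hL hlast hα hchain _ _ (by omega) (by rw [h]; norm_num)
      · simp only [List.Chain']; rw [List.isChain_append]
        refine ⟨?_, chain_mkW [c'] (List.isChain_singleton _), ?_⟩
        · rcases aux_inner c with h | h <;>
            exact chain_Bd α L uk hL hlast hα hchain _ _ (by omega) (by rw [h]; norm_num)
        · intro x hx y _
          exact P_of_getLast_Bd α L uk hL hlast hα hchain _ _ hm (aux_abs_d c c') x hx y
  | c :: c' :: c'' :: rest => fun hred => by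
      have hR : c.1 = c'.1 → c.2 = c'.2 := (List.isChain_cons_cons.1 hred).1
      have hred' : Reduced (c' :: c'' :: rest) := (List.isChain_cons_cons.1 hred).2
      have hR2 : c'.1 = c''.1 → c'.2 = c''.2 := (List.isChain_cons_cons.1 hred').1
      have hred'' : Reduced (c'' :: rest) := (List.isChain_cons_cons.1 hred').2
      rw [mkW]
      split_ifs with hm
      · simp only [List.Chain']; rw [List.isChain_append]
        refine ⟨?_, chain_mkW (c'' :: rest) hred'', ?_⟩
        · rcases aux_merge c c' hR hm with h | h <;>
            exact chain_Bd α L uk hL hlast hα hchain _ _ (by omega) (by rw [h]; norm_num)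
        · intro x hx y _
          exact P_of_getLast_Bd α L uk hL hlast hα hchain _ _
            (aux_no_double_merge c c' c'' hR hR2 hm) (aux_abs_d c' c'') x hx y
      · simp only [List.Chain']; rw [List.isChain_append]
        refine ⟨?_, chain_mkW (c' :: c'' :: rest) hred', ?_⟩
        · rcases aux_inner c with h | h <;>
            exact chain_Bd α L uk hL hlast hα hchain _ _ (by omega) (by rw [h]; norm_num)
        · intro x hx y _
          exact P_of_getLast_Bd α L uk hL hlast hα hchain _ _ hm (aux_abs_d c c') x hx y

omit hL hlast hα hchain

/-- The candidate generators. -/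
def xel : HNNExtension G A B φ := listProd φ L * of α * (listProd φ L)⁻¹ * of α

def yel : HNNExtension G A B φ := of α * (listProd φ L * of α * (listProd φ L)⁻¹)

/-- The image of a letter. -/
def ξ : Bool × Bool → HNNExtension G A B φ := fun c =>
  cond c.2 (if c.1 then xel φ α L else yel φ α L) (if c.1 then xel φ α L else yel φ α L)⁻¹

lemma xi_eq (c : Bool × Bool) :
    ξ φ α L c = of α ^ lead c * (listProd φ L * of α ^ inner c * (listProd φ L)⁻¹) *
      of α ^ trail c := by
  rcases c with ⟨b, s⟩
  cases b <;> cases s <;>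
    simp only [ξ, xel, yel, lead, inner, trail, cond_true, cond_false, if_true, if_false,
      Bool.false_eq_true, zpow_zero, zpow_one, zpow_neg] <;>
    group

include hL hlast

lemma listProd_Bd' (s e : ℤ) :
    listProd φ (Bd α L uk s e) =
      listProd φ L * of α ^ s * (listProd φ L)⁻¹ * of α ^ e := by
  rw [listProd_Bd φ α L uk hL hlast, map_zpow, map_zpow]

lemma prod_mkW : ∀ (l : List (Bool × Bool)), Reduced l → l ≠ [] →
    ((l.map (ξ φ α L)).prod : HNNExtension G A B φ) =
      of α ^ lead l.headI * listProd φ (mkW α L uk l)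
  | [] => fun _ h => absurd rfl h
  | [c] => fun _ _ => by
      rw [mkW, List.map_singleton, List.prod_singleton, xi_eq, listProd_Bd' φ α L uk hL hlast]
      simp [List.headI]
      group
  | [c, c'] => fun hred _ => by
      have hR : c.1 = c'.1 → c.2 = c'.2 := (List.isChain_cons_cons.1 hred).1
      rw [mkW]
      split_ifs with hm
      · have hm' : trail c = -lead c' := by omega
        rw [List.map_cons, List.map_singleton, List.prod_cons, List.prod_singleton,
          xi_eq, xi_eq, listProd_Bd' φ α L uk hL hlast, hm']
        simp only [List.headI]
        group
      · rw [List.map_cons, List.prod_cons, xi_eq,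
          prod_mkW [c'] (List.isChain_singleton _) (by simp),
          listProd_append, listProd_Bd' φ α L uk hL hlast]
        simp only [List.headI]
        group
  | c :: c' :: c'' :: rest => fun hred _ => by
      have hred' : Reduced (c' :: c'' :: rest) := (List.isChain_cons_cons.1 hred).2
      have hred'' : Reduced (c'' :: rest) := (List.isChain_cons_cons.1 hred').2
      rw [mkW]
      split_ifs with hm
      · have hm' : trail c = -lead c' := by omega
        rw [List.map_cons, List.map_cons, List.prod_cons, List.prod_cons,
          xi_eq, xi_eq, prod_mkW (c'' :: rest) hred'' (by simp),
          listProd_append, listProd_Bd' φ α L uk hL hlast, hm']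
        simp only [List.headI]
        group
      · rw [List.map_cons, List.prod_cons, xi_eq,
          prod_mkW (c' :: c'' :: rest) hred' (by simp),
          listProd_append, listProd_Bd' φ α L uk hL hlast]
        simp only [List.headI]
        group

end Blocks

/-- Any reduced word (in the sense of `FreeGroup`) satisfies our chain condition. -/
lemma chain_of_noShrink {β : Type*} : ∀ (l : List (β × Bool)),
    (∀ (L2 L3 : List (β × Bool)) (x : β) (b : Bool), l ≠ L2 ++ (x, b) :: (x, !b) :: L3) →
    List.Chain' (fun p q : β × Bool => p.1 = q.1 → p.2 = q.2) l
  | [], _ => List.isChain_nil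
  | [c], _ => List.isChain_singleton _
  | p :: q :: T, H => by
      simp only [List.Chain']; rw [List.isChain_cons_cons]
      constructor
      · intro h1
        by_contra h2
        refine H [] T p.1 p.2 ?_
        have : q = (p.1, !p.2) := by
          rcases p with ⟨x, b⟩; rcases q with ⟨y, c⟩
          simp only at h1 h2 ⊢
          cases b <;> cases c <;> simp_all
        rw [this]
        simp
      · exact chain_of_noShrink (q :: T)
          (fun L2 L3 x b hEq => H (p :: L2) L3 x b (by rw [hEq]; rfl))

lemma reduced_toWord' (z : FreeGroup Bool) : Reduced z.toWord := by
  apply chain_of_noShrink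
  intro L2 L3 x b h
  have h2 : FreeGroup.reduce z.toWord = L2 ++ (x, b) :: (x, !b) :: L3 := by
    rw [FreeGroup.reduce_toWord]; exact h
  exact FreeGroup.reduce.not h2

/-- The core ping-pong theorem in an HNN extension. -/
theorem core_injective (α : G)
    (hα : ∀ s : ℤ, s ≠ 0 → |s| ≤ 2 → ∀ u : ℤˣ, α ^ s ∉ toSubgroup A B u)
    (L : List (ℤˣ × G)) (uk : ℤˣ) (hL : L ≠ []) (hlast : L.getLast hL = (uk, 1))
    (hchain : L.Chain' (P A B)) :
    Function.Injective
      ((FreeGroup.lift (fun b : Bool => if b then xel φ α L else yel φ α L)) :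
        FreeGroup Bool →* HNNExtension G A B φ) := by
  rw [injective_iff_map_eq_one]
  intro z hz
  by_contra hz1
  have hne : z.toWord ≠ [] := fun h => hz1 (FreeGroup.toWord_eq_nil_iff.1 h)
  have hred : Reduced z.toWord := reduced_toWord' z
  set W : ReducedWord G A B :=
    ⟨α ^ lead z.toWord.headI, mkW α L uk z.toWord,
      chain_mkW α L uk hL hlast hα hchain z.toWord hred⟩ with hW
  have hWprod : W.prod φ = 1 := by
    have h1 : W.prod φ = of (α ^ lead z.toWord.headI) * listProd φ (mkW α L uk z.toWord) := rfl
    rw [h1, map_zpow, ← prod_mkW φ α L uk hL hlast z.toWord hred hne]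
    rw [show ((z.toWord.map (ξ φ α L)).prod : HNNExtension G A B φ) =
      (FreeGroup.lift (fun b : Bool => if b then xel φ α L else yel φ α L)) z by
        conv_rhs => rw [← FreeGroup.mk_toWord (x := z)]
        rw [FreeGroup.lift_mk]
        rfl]
    exact hz
  have := ReducedWord.toList_eq_nil_of_mem_of_range φ W (by rw [hWprod]; exact ⟨1, map_one _⟩)
  exact mkW_ne_nil α L uk z.toWord hne this

lemma chain_replaceLast {l : List (ℤˣ × G)} (hl : l ≠ []) (h : l.Chain' (P A B)) (g' : G) :
    (l.dropLast ++ [((l.getLast hl).1, g')]).Chain' (P A B) := by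
  conv at h => rw [← List.dropLast_append_getLast hl]
  simp only [List.Chain'] at h ⊢; rw [List.isChain_append] at h ⊢
  refine ⟨h.1, List.isChain_singleton _, ?_⟩
  intro x hx y hy
  simp only [List.head?_cons, Option.mem_def, Option.some_inj] at hy
  subst hy
  intro hmem
  exact h.2.2 x hx (l.getLast hl) (by simp) hmem

end Core



abbrev MZ : Type := Multiplicative ℤ

def Am (m : ℤ) : Subgroup MZ := Subgroup.zpowers (ofAdd m)

lemma ofAdd_zpow' (x i : ℤ) : (ofAdd x : MZ) ^ i = ofAdd (i * x) := by
  rw [← ofAdd_zsmul, smul_eq_mul]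

noncomputable def em (m : ℤ) (hm : m ≠ 0) : MZ ≃* Am m := by
  refine MulEquiv.ofBijective (zpowersHom (Am m) ⟨ofAdd m, Subgroup.mem_zpowers _⟩) ⟨?_, ?_⟩
  · intro x y hxy
    have h1 : ((zpowersHom (Am m) ⟨ofAdd m, Subgroup.mem_zpowers _⟩ x : Am m) : MZ)
        = ((zpowersHom (Am m) ⟨ofAdd m, Subgroup.mem_zpowers _⟩ y : Am m) : MZ) := by rw [hxy]
    rw [zpowersHom_apply, zpowersHom_apply] at h1
    push_cast at h1
    rw [ofAdd_zpow', ofAdd_zpow'] at h1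
    have h2 : x.toAdd * m = y.toAdd * m := by
      have := congrArg Multiplicative.toAdd h1
      simpa using this
    have h3 : x.toAdd = y.toAdd := by
      exact mul_right_cancel₀ hm h2
    exact Multiplicative.toAdd.injective h3
  · rintro ⟨y, hy⟩
    obtain ⟨k, hk⟩ := Subgroup.mem_zpowers_iff.1 hy
    refine ⟨ofAdd k, ?_⟩
    apply Subtype.ext
    rw [zpowersHom_apply]
    push_cast
    simpa using hk

lemma em_apply (m : ℤ) (hm : m ≠ 0) (k : ℤ) :
    ((em m hm (ofAdd k) : Am m) : MZ) = (ofAdd m : MZ) ^ k := by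
  show ((zpowersHom (Am m) ⟨ofAdd m, Subgroup.mem_zpowers _⟩ (ofAdd k) : Am m) : MZ) = _
  rw [zpowersHom_apply]
  push_cast
  simp

noncomputable def φBS (m n : ℤ) (hm : m ≠ 0) (hn : n ≠ 0) : Am m ≃* Am n :=
  (em m hm).symm.trans (em n hn)

lemma φBS_apply (m n : ℤ) (hm : m ≠ 0) (hn : n ≠ 0) (k : ℤ) (h : (ofAdd m : MZ) ^ k ∈ Am m) :
    ((φBS m n hm hn ⟨(ofAdd m : MZ) ^ k, h⟩ : Am n) : MZ) = (ofAdd n : MZ) ^ k := by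
  have h1 : (⟨(ofAdd m : MZ) ^ k, h⟩ : Am m) = em m hm (ofAdd k) :=
    Subtype.ext (em_apply m hm k).symm
  rw [h1, φBS, MulEquiv.trans_apply, MulEquiv.symm_apply_apply, em_apply]

lemma not_mem_Am (m s : ℤ) (hm : 3 ≤ |m|) (hs : s ≠ 0) (h2 : |s| ≤ 2) :
    (ofAdd (1 : ℤ) : MZ) ^ s ∉ Am m := by
  rintro ⟨k, hk⟩
  have hk' : (ofAdd m : MZ) ^ k = (ofAdd (1 : ℤ) : MZ) ^ s := hk
  rw [ofAdd_zpow', ofAdd_zpow', mul_one] at hk'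
  replace hk := hk'
  have h3 : k * m = s := by
    have := congrArg Multiplicative.toAdd hk
    simpa [mul_comm] using this
  have h4 : k ≠ 0 := by rintro rfl; simp at h3; omega
  have h5 : |k * m| = |k| * |m| := abs_mul k m
  have h6 : 1 ≤ |k| := Int.one_le_abs (by simpa using h4)
  have h7 : |m| ≤ |k| * |m| := le_mul_of_one_le_left (abs_nonneg m) h6
  rw [← h5, h3] at h7
  omega

lemma BS_rel (m n : ℤ) : BS.t m n * BS.a m n ^ m * (BS.t m n)⁻¹ = BS.a m n ^ n := by
  have hmem : FreeGroup.of true * FreeGroup.of false ^ m * (FreeGroup.of true)⁻¹ *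
      (FreeGroup.of false ^ n)⁻¹ ∈ Subgroup.normalClosure (bsRels m n) :=
    Subgroup.subset_normalClosure rfl
  have h1 : (QuotientGroup.mk' (Subgroup.normalClosure (bsRels m n)))
      (FreeGroup.of true * FreeGroup.of false ^ m * (FreeGroup.of true)⁻¹ *
        (FreeGroup.of false ^ n)⁻¹) = 1 := (QuotientGroup.eq_one_iff _).2 hmem
  rw [map_mul, map_mul, map_mul, map_inv, map_inv, map_zpow, map_zpow] at h1
  have h2 : (QuotientGroup.mk' (Subgroup.normalClosure (bsRels m n))) (FreeGroup.of true)
      = BS.t m n := rfl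
  have h3 : (QuotientGroup.mk' (Subgroup.normalClosure (bsRels m n))) (FreeGroup.of false)
      = BS.a m n := rfl
  rw [h2, h3] at h1
  exact mul_inv_eq_one.1 h1

lemma BS_rel_k (m n k : ℤ) :
    BS.t m n * BS.a m n ^ (k * m) * (BS.t m n)⁻¹ = BS.a m n ^ (k * n) := by
  rw [mul_comm k m, mul_comm k n, zpow_mul, zpow_mul, ← conj_zpow, BS_rel]

section Homs

variable (m n : ℤ) (hm : m ≠ 0) (hn : n ≠ 0)

noncomputable def psi : BS m n →* HNNExtension MZ (Am m) (Am n) (φBS m n hm hn) := by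
  refine PresentedGroup.toGroup (f := fun b : Bool =>
    if b then (t : HNNExtension MZ (Am m) (Am n) (φBS m n hm hn)) else of (ofAdd (1:ℤ))) ?_
  rintro r rfl
  simp only [map_mul, map_inv, map_zpow, FreeGroup.lift_apply_of, Bool.false_eq_true, if_true, if_false]
  have h1 : (of (ofAdd (1:ℤ)) : HNNExtension MZ (Am m) (Am n) (φBS m n hm hn)) ^ m
      = of (ofAdd m) := by rw [← map_zpow, ofAdd_zpow', mul_one]
  have h2 : (of (ofAdd (1:ℤ)) : HNNExtension MZ (Am m) (Am n) (φBS m n hm hn)) ^ n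
      = of (ofAdd n) := by rw [← map_zpow, ofAdd_zpow', mul_one]
  rw [h1, h2]
  have h3 : (ofAdd m : MZ) ∈ Am m := Subgroup.mem_zpowers _
  have h5 : ((φBS m n hm hn ⟨ofAdd m, h3⟩ : Am n) : MZ) = ofAdd n := by
    have h6 : (⟨ofAdd m, h3⟩ : Am m) = ⟨(ofAdd m : MZ) ^ (1:ℤ), by simpa using h3⟩ := by
      apply Subtype.ext; simp
    rw [h6, φBS_apply m n hm hn 1]
    simp
  have h4 : t * (of (ofAdd m) : HNNExtension MZ (Am m) (Am n) (φBS m n hm hn)) * t⁻¹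
      = of (ofAdd n) := by
    have h7 := equiv_eq_conj (φ := φBS m n hm hn) ⟨ofAdd m, h3⟩
    rw [h5] at h7
    exact h7.symm
  rw [h4]
  simp

lemma psi_a : psi m n hm hn (BS.a m n) = of (ofAdd (1:ℤ)) := by
  rw [BS.a, psi, PresentedGroup.toGroup.of]
  simp

lemma psi_t : psi m n hm hn (BS.t m n) = t := by
  rw [BS.t, psi, PresentedGroup.toGroup.of]
  simp

noncomputable def chi : HNNExtension MZ (Am m) (Am n) (φBS m n hm hn) →* BS m n := by
  refine HNNExtension.lift (zpowersHom (BS m n) (BS.a m n)) (BS.t m n) ?_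
  intro c
  obtain ⟨k, hk⟩ := Subgroup.mem_zpowers_iff.1 c.2
  have hc : c = ⟨(ofAdd m : MZ) ^ k, by rw [hk]; exact c.2⟩ := Subtype.ext hk.symm
  rw [hc, φBS_apply m n hm hn k]
  rw [zpowersHom_apply, zpowersHom_apply]
  have h1 : ((ofAdd m : MZ) ^ k).toAdd = k * m := by
    rw [toAdd_zpow]; simp [smul_eq_mul]
  have h2 : ((ofAdd n : MZ) ^ k).toAdd = k * n := by
    rw [toAdd_zpow]; simp [smul_eq_mul]
  rw [h1, h2]
  have := BS_rel_k m n k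
  rw [← this]
  group

lemma chi_psi (x : BS m n) : chi m n hm hn (psi m n hm hn x) = x := by
  have h : (chi m n hm hn).comp (psi m n hm hn) = MonoidHom.id (BS m n) := by
    apply PresentedGroup.ext
    intro b
    cases b
    · show chi m n hm hn (psi m n hm hn (BS.a m n)) = BS.a m n
      rw [psi_a, chi, HNNExtension.lift_of, zpowersHom_apply]
      simp
    · show chi m n hm hn (psi m n hm hn (BS.t m n)) = BS.t m n
      rw [psi_t, chi, HNNExtension.lift_t]
  exact DFunLike.congr_fun h x

end Homs

end PingPong

open PingPong in
theorem free_subgroup_from_conjugates (m n : ℤ) (hm : 3 ≤ |m|) (hn : 3 ≤ |n|)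
    (g : BS m n) (hg : g ∉ Subgroup.zpowers (BS.a m n)) :
    ∃ i j : ℤ, ∀ h : BS m n, h = BS.a m n ^ i * g * BS.a m n ^ j →
      FreelyGenerateF2 (h * BS.a m n * h⁻¹ * BS.a m n) (BS.a m n * h * BS.a m n * h⁻¹) := by
  have hm0 : m ≠ 0 := by rintro rfl; simp at hm
  have hn0 : n ≠ 0 := by rintro rfl; simp at hn
  set φ := φBS m n hm0 hn0 with hφ
  set ψ := psi m n hm0 hn0 with hψ
  have hrange : ψ g ∉ (HNNExtension.of :
      MZ →* HNNExtension MZ (Am m) (Am n) φ).range := by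
    rintro ⟨v, hv⟩
    apply hg
    have h1 : g = chi m n hm0 hn0 (ψ g) := (chi_psi m n hm0 hn0 g).symm
    rw [h1, ← hv, chi, HNNExtension.lift_of, zpowersHom_apply]
    exact Subgroup.mem_zpowers_iff.2 ⟨v.toAdd, rfl⟩
  obtain ⟨d⟩ := TransversalPair.nonempty MZ (Am m) (Am n)
  set w := HNNExtension.NormalWord.equiv φ d (ψ g) with hwdef
  have hprod : w.prod φ = ψ g := (HNNExtension.NormalWord.equiv φ d).symm_apply_apply (ψ g)
  have hwne : w.toList ≠ [] := by
    intro hnil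
    apply hrange
    refine ⟨w.head, ?_⟩
    rw [← hprod]
    show HNNExtension.of w.head = ReducedWord.prod φ w.toReducedWord
    rw [ReducedWord.prod]
    have : w.toReducedWord.toList = w.toList := rfl
    rw [this, hnil]
    simp
  set p := w.toList.getLast hwne with hp
  refine ⟨-(w.head.toAdd), -(p.2.toAdd), ?_⟩
  intro h hdef
  set L : List (ℤˣ × MZ) := w.toList.dropLast ++ [(p.1, 1)] with hLdef
  have hL : L ≠ [] := by simp [hLdef]
  have hlast : L.getLast hL = (p.1, 1) := by
    exact (List.getLast_append_of_ne_nil (l := w.toList.dropLast) _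
      (by simp : ([(p.1, (1:MZ))] : List (ℤˣ × MZ)) ≠ [])).trans rfl
  have hchain : L.Chain' (P (Am m) (Am n)) :=
    chain_replaceLast (A := Am m) (B := Am n) hwne w.chain 1
  have hα : ∀ s : ℤ, s ≠ 0 → |s| ≤ 2 → ∀ u : ℤˣ,
      (ofAdd (1:ℤ) : MZ) ^ s ∉ toSubgroup (Am m) (Am n) u := by
    intro s hs h2 u
    rcases Int.units_eq_one_or u with rfl | rfl
    · exact not_mem_Am m s hm hs h2
    · exact not_mem_Am n s hn hs h2
  have hdecomp : w.toList = w.toList.dropLast ++ [p] := (List.dropLast_append_getLast hwne).symm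
  have hofAdd : ∀ i : ℤ, (HNNExtension.of (ofAdd i) :
      HNNExtension MZ (Am m) (Am n) φ) = HNNExtension.of (ofAdd (1:ℤ)) ^ i := by
    intro i
    rw [← map_zpow, ofAdd_zpow', mul_one]
  have hcancel1 : (ofAdd (-(w.head.toAdd)) : MZ) * w.head = 1 := by
    conv_lhs => rw [show w.head = ofAdd (w.head.toAdd) from rfl]
    rw [← ofAdd_add]
    simp
  have hcancel2 : p.2 * (ofAdd (-(p.2.toAdd)) : MZ) = 1 := by
    conv_lhs => rw [show p.2 = ofAdd (p.2.toAdd) from rfl]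
    rw [← ofAdd_add]
    simp
  have hψh : ψ (BS.a m n ^ (-(w.head.toAdd)) * g * BS.a m n ^ (-(p.2.toAdd)))
      = listProd φ L := by
    rw [map_mul, map_mul, map_zpow, map_zpow, psi_a, ← hprod]
    rw [show (w.prod φ : HNNExtension MZ (Am m) (Am n) φ)
        = HNNExtension.of w.head * listProd φ w.toList from rfl]
    conv_lhs => rw [hdecomp]
    rw [hLdef, listProd_append, listProd_append, listProd_singleton, listProd_singleton,
      ← hofAdd, ← hofAdd]
    rw [show (HNNExtension.of (ofAdd (-(w.head.toAdd))) : HNNExtension MZ (Am m) (Am n) φ) *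
        (HNNExtension.of w.head * (listProd φ w.toList.dropLast * (t ^ (p.1 : ℤ) *
          HNNExtension.of p.2))) * HNNExtension.of (ofAdd (-(p.2.toAdd)))
        = (HNNExtension.of (ofAdd (-(w.head.toAdd))) * HNNExtension.of w.head) *
          (listProd φ w.toList.dropLast * (t ^ (p.1 : ℤ) *
            (HNNExtension.of p.2 * HNNExtension.of (ofAdd (-(p.2.toAdd)))))) by group]
    rw [← map_mul, ← map_mul, hcancel1, hcancel2]
    simp
  have hψh' : ψ h = listProd φ L := by rw [hdef]; exact hψh
  have hinj := core_injective φ (ofAdd 1) hα L p.1 hL hlast hchain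
  rw [FreelyGenerateF2]
  have hcomp : ψ.comp (FreeGroup.lift fun b : Bool =>
        if b then h * BS.a m n * h⁻¹ * BS.a m n else BS.a m n * h * BS.a m n * h⁻¹)
      = FreeGroup.lift (fun b : Bool =>
        if b then xel φ (ofAdd 1) L else yel φ (ofAdd 1) L) := by
    apply FreeGroup.ext_hom
    intro b
    cases b <;>
      simp only [MonoidHom.coe_comp, Function.comp_apply, FreeGroup.lift_apply_of,
        Bool.false_eq_true, if_true, if_false, map_mul, map_inv, hψh', hψ, psi_a, xel, yel,
        mul_assoc] <;> rw [← hψ, hψh']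
  have h2 : Function.Injective (⇑ψ ∘ ⇑(FreeGroup.lift fun b : Bool =>
      if b then h * BS.a m n * h⁻¹ * BS.a m n else BS.a m n * h * BS.a m n * h⁻¹)) := by
    rw [← MonoidHom.coe_comp, hcomp]
    exact hinj
  exact h2.of_comp
end

section
/- Let K and L be countable torsion-free groups with K nontrivial, and let H be a subgroup of K which is maximal amenable in K. Then the image of H under the canonical inclusion of K into the free product K * L is a maximal amenable subgroup of K * L. -/
open Function Filter

/-- A monoid is torsion-free if no non-identity element has finite order (the definition of
`Monoid.IsTorsionFree` in older Mathlib, since removed). -/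
def Monoid.IsTorsionFree (G : Type*) [Monoid G] : Prop :=
  ∀ g : G, g ≠ 1 → ¬IsOfFinOrder g

lemma bdd_range_iff {G : Type*} (f : G → ℝ) :
    Bornology.IsBounded (Set.range f) ↔ ∃ C, ∀ x, |f x| ≤ C := by
  constructor
  · intro h
    obtain ⟨⟨a, ha⟩, ⟨b, hb⟩⟩ := isBounded_iff_bddBelow_bddAbove.mp h
    refine ⟨max |a| |b|, fun x => ?_⟩
    rw [abs_le]
    constructor
    · calc -max |a| |b| ≤ -|a| := by simp
        _ ≤ a := neg_abs_le a
        _ ≤ f x := ha (Set.mem_range_self x)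
    · calc f x ≤ b := hb (Set.mem_range_self x)
        _ ≤ |b| := le_abs_self b
        _ ≤ max |a| |b| := le_max_right _ _
  · rintro ⟨C, hC⟩
    refine (Metric.isBounded_Icc (-C) C).subset ?_
    rintro _ ⟨x, rfl⟩
    exact abs_le.mp (hC x) |>.imp id id |> fun h => ⟨h.1, h.2⟩

/-- Amenability passes to a group admitting an injective homomorphism into an
amenable group. -/
lemma isAmenable_of_injective {G A : Type*} [Group G] [Group A] (φ : G →* A)
    (hφ : Injective φ) (hA : IsAmenable A) : IsAmenable G := by
  classical
  obtain ⟨m, madd, msmul, mpos, mone, minv⟩ := hA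
  -- the setoid of right cosets of the image of φ
  let s : Setoid A :=
    ⟨fun a b => ∃ g : G, φ g * b = a, fun a => ⟨1, by simp⟩,
      fun {a b} ⟨g, hg⟩ => ⟨g⁻¹, by rw [← hg, ← mul_assoc, ← map_mul, inv_mul_cancel, map_one, one_mul]⟩,
      fun {a b c} ⟨g, hg⟩ ⟨g', hg'⟩ => ⟨g * g', by rw [map_mul, mul_assoc, hg', hg]⟩⟩
  have hrel : ∀ a : A, ∃ g : G, φ g * Quotient.out (Quotient.mk s a) = a := fun a =>
    Setoid.symm (Quotient.exact (Quotient.out_eq (Quotient.mk s a)))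
  let r : A → G := fun a => (hrel a).choose
  have hr : ∀ a, φ (r a) * Quotient.out (Quotient.mk s a) = a := fun a => (hrel a).choose_spec
  have hmk : ∀ (g : G) (a : A), Quotient.mk s (φ g * a) = Quotient.mk s a := fun g a =>
    Quotient.sound ⟨g, rfl⟩
  have hreq : ∀ (g : G) (a : A), r (φ g * a) = g * r a := by
    intro g a
    apply hφ
    have h1 := hr (φ g * a)
    rw [hmk g a] at h1
    have h2 : φ (r (φ g * a)) * (Quotient.mk s a).out = φ (g * r a) * (Quotient.mk s a).out := by
      rw [h1, map_mul, mul_assoc, hr a]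
    exact mul_right_cancel h2
  have hcomp : ∀ f : G → ℝ, Bornology.IsBounded (Set.range f) →
      Bornology.IsBounded (Set.range (fun a => f (r a))) := by
    intro f hf
    refine hf.subset ?_
    rintro _ ⟨a, rfl⟩; exact Set.mem_range_self _
  refine ⟨fun f => m (fun a => f (r a)), ?_, ?_, ?_, ?_, ?_⟩
  · intro f₁ f₂ h1 h2
    have := madd (fun a => f₁ (r a)) (fun a => f₂ (r a)) (hcomp _ h1) (hcomp _ h2)
    simpa [Pi.add_def] using this
  · intro c f hf
    have := msmul c (fun a => f (r a)) (hcomp _ hf)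
    simpa [Pi.smul_def] using this
  · intro f hf hf0
    exact mpos _ (hcomp _ hf) (fun a => hf0 _)
  · exact mone
  · intro g f hf
    have := minv (φ g) (fun a => f (r a)) (hcomp _ hf)
    calc m (fun a => f (g * r a)) = m (fun a => f (r (φ g * a))) := by
          simp only [hreq]
      _ = m (fun a => f (r a)) := this


namespace ZMean

noncomputable def U : Ultrafilter ℕ := Ultrafilter.of atTop

lemma U_le : (U : Filter ℕ) ≤ atTop := Ultrafilter.of_le _

/-- Cesàro-type averages of `f` over `{0, 1, ..., n-1}`. -/
noncomputable def avg (f : ℤ → ℝ) (n : ℕ) : ℝ :=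
  (∑ k ∈ Finset.range n, f k) / n

lemma avg_abs_le {f : ℤ → ℝ} {C : ℝ} (hC : ∀ x, |f x| ≤ C) (n : ℕ) : |avg f n| ≤ C := by
  have hC0 : 0 ≤ C := le_trans (abs_nonneg _) (hC 0)
  rcases Nat.eq_zero_or_pos n with rfl | hn
  · simp [avg, hC0]
  · rw [avg, abs_div, abs_of_nonneg (by positivity : (0:ℝ) ≤ (n:ℝ)), div_le_iff₀ (by positivity)]
    calc |∑ k ∈ Finset.range n, f k| ≤ ∑ k ∈ Finset.range n, |f k| :=
          Finset.abs_sum_le_sum_abs _ _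
      _ ≤ ∑ _k ∈ Finset.range n, C := Finset.sum_le_sum (fun k _ => hC k)
      _ = C * n := by simp [mul_comm]

lemma exists_lim {f : ℤ → ℝ} (hf : ∃ C, ∀ x, |f x| ≤ C) :
    ∃ l, Tendsto (avg f) (U : Filter ℕ) (nhds l) := by
  obtain ⟨C, hC⟩ := hf
  have hC0 : 0 ≤ C := le_trans (abs_nonneg _) (hC 0)
  have hcpt : IsCompact (Set.Icc (-C) C) := isCompact_Icc
  have hmem : ∀ n, avg f n ∈ Set.Icc (-C) C := fun n => abs_le.mp (avg_abs_le hC n)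
  obtain ⟨a, -, ha⟩ := hcpt.ultrafilter_le_nhds (U.map (avg f))
    (by exact le_principal_iff.mpr (Filter.mem_map.mpr (univ_mem' hmem)))
  exact ⟨a, ha⟩

open Classical in
noncomputable def mz (f : ℤ → ℝ) : ℝ :=
  if h : ∃ l, Tendsto (avg f) (U : Filter ℕ) (nhds l) then h.choose else 0

lemma tendsto_mz {f : ℤ → ℝ} (hf : ∃ C, ∀ x, |f x| ≤ C) :
    Tendsto (avg f) (U : Filter ℕ) (nhds (mz f)) := by
  rw [mz]
  rw [dif_pos (exists_lim hf)]
  exact (exists_lim hf).choose_spec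

lemma mz_eq {f : ℤ → ℝ} {l : ℝ} (h : Tendsto (avg f) (U : Filter ℕ) (nhds l)) :
    mz f = l := by
  have : Tendsto (avg f) (U : Filter ℕ) (nhds (mz f)) := by
    rw [mz]
    rw [dif_pos ⟨l, h⟩]
    exact (Exists.choose_spec (⟨l, h⟩ : ∃ l, Tendsto (avg f) (U : Filter ℕ) (nhds l)))
  exact tendsto_nhds_unique this h

lemma avg_shift_one (f : ℤ → ℝ) (n : ℕ) :
    avg (fun x => f (1 + x)) n - avg f n = (f n - f 0) / n := by
  rcases Nat.eq_zero_or_pos n with rfl | hn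
  · simp [avg]
  · rw [avg, avg, div_sub_div_same]
    have h1 : ∑ k ∈ Finset.range n, f (1 + (k:ℤ)) + f 0 = ∑ k ∈ Finset.range (n+1), f k := by
      rw [Finset.sum_range_succ']
      have he : (∑ k ∈ Finset.range n, f (↑(k+1))) = ∑ k ∈ Finset.range n, f (1+(k:ℤ)) :=
        Finset.sum_congr rfl (fun k _ => by push_cast; rw [add_comm 1 (k:ℤ)])
      rw [he]
      norm_num
    have h2 : ∑ k ∈ Finset.range (n+1), (f k : ℝ) = ∑ k ∈ Finset.range n, f k + f n :=
      Finset.sum_range_succ _ _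
    have h3 : ∑ k ∈ Finset.range n, f (1 + (k:ℤ)) - ∑ k ∈ Finset.range n, f k = f n - f 0 := by
      have := h1.trans h2
      linarith
    rw [h3]

lemma mz_shift_one {f : ℤ → ℝ} (hf : ∃ C, ∀ x, |f x| ≤ C) :
    mz (fun x => f (1 + x)) = mz f := by
  obtain ⟨C, hC⟩ := hf
  have hb : ∃ C, ∀ x, |f (1 + x)| ≤ C := ⟨C, fun x => hC _⟩
  have h1 : Tendsto (fun n => avg (fun x => f (1 + x)) n - avg f n) atTop (nhds 0) := by
    have : ∀ n : ℕ, avg (fun x => f (1 + x)) n - avg f n = (f n - f 0) / n :=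
      avg_shift_one f
    rw [show (fun n : ℕ => avg (fun x => f (1 + x)) n - avg f n) = fun n : ℕ => (f n - f 0)/n from
      funext this]
    have hb2 : Tendsto (fun n : ℕ => (2*C)/(n:ℝ)) atTop (nhds 0) :=
      Tendsto.div_atTop tendsto_const_nhds tendsto_natCast_atTop_atTop
    refine squeeze_zero_norm (fun n => ?_) hb2
    rcases Nat.eq_zero_or_pos n with rfl | hn
    · simp
    · rw [Real.norm_eq_abs, abs_div, abs_of_nonneg (by positivity : (0:ℝ) ≤ (n:ℝ))]
      apply div_le_div_of_nonneg_right ?_ (by positivity)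
      calc |f n - f 0| ≤ |f n| + |f 0| := abs_sub _ _
        _ ≤ C + C := add_le_add (hC _) (hC _)
        _ = 2*C := by ring
  have h2 : Tendsto (fun n => avg (fun x => f (1 + x)) n - avg f n) (U : Filter ℕ) (nhds 0) :=
    h1.mono_left U_le
  have h3 : Tendsto (avg (fun x => f (1 + x))) (U : Filter ℕ) (nhds (0 + mz f)) := by
    have := h2.add (tendsto_mz ⟨C, hC⟩)
    simpa using this
  rw [mz_eq h3, zero_add]

end ZMean

namespace ZMean

lemma mz_shift {f : ℤ → ℝ} (hf : ∃ C, ∀ x, |f x| ≤ C) (s : ℤ) :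
    mz (fun x => f (s + x)) = mz f := by
  induction s using Int.induction_on with
  | zero => simp
  | succ n ih =>
    have hb : ∃ C, ∀ x, |f ((n:ℤ) + x)| ≤ C := hf.imp (fun C hC x => hC _)
    have h1 : (fun x => f ((n:ℤ) + 1 + x)) = (fun x => (fun y => f ((n:ℤ) + y)) (1 + x)) := by
      funext x
      congr 1
      ring
    rw [h1, mz_shift_one hb, ih]
  | pred n ih =>
    have hb : ∃ C, ∀ x, |f (-(n:ℤ) - 1 + x)| ≤ C := hf.imp (fun C hC x => hC _)
    have h1 : (fun x => f (-(n:ℤ) + x)) = (fun x => (fun y => f (-(n:ℤ) - 1 + y)) (1 + x)) := by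
      funext x
      congr 1
      ring
    rw [← ih, h1, mz_shift_one hb]

lemma avg_add (f g : ℤ → ℝ) (n : ℕ) : avg (f + g) n = avg f n + avg g n := by
  rw [avg, avg, avg, ← add_div, ← Finset.sum_add_distrib]
  rfl

lemma avg_smul (c : ℝ) (f : ℤ → ℝ) (n : ℕ) : avg (c • f) n = c * avg f n := by
  rw [avg, avg, ← mul_div_assoc, Finset.mul_sum]
  congr 1

end ZMean

open ZMean in
lemma isAmenable_multiplicative_int : IsAmenable (Multiplicative ℤ) := by
  refine ⟨fun f => mz (fun k => f (Multiplicative.ofAdd k)), ?_, ?_, ?_, ?_, ?_⟩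
  · intro f₁ f₂ h1 h2
    obtain ⟨C₁, hC₁⟩ := (bdd_range_iff _).mp h1
    obtain ⟨C₂, hC₂⟩ := (bdd_range_iff _).mp h2
    have hb1 : ∃ C, ∀ x : ℤ, |f₁ (Multiplicative.ofAdd x)| ≤ C := ⟨C₁, fun x => hC₁ _⟩
    have hb2 : ∃ C, ∀ x : ℤ, |f₂ (Multiplicative.ofAdd x)| ≤ C := ⟨C₂, fun x => hC₂ _⟩
    have : Tendsto (avg (fun k => (f₁ + f₂) (Multiplicative.ofAdd k))) (U : Filter ℕ)
        (nhds (mz (fun k => f₁ (Multiplicative.ofAdd k)) +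
               mz (fun k => f₂ (Multiplicative.ofAdd k)))) := by
      have heq : (avg (fun k => (f₁ + f₂) (Multiplicative.ofAdd k))) = fun n =>
          avg (fun k => f₁ (Multiplicative.ofAdd k)) n +
          avg (fun k => f₂ (Multiplicative.ofAdd k)) n := by
        funext n
        exact avg_add _ _ n
      rw [heq]
      exact (tendsto_mz hb1).add (tendsto_mz hb2)
    exact mz_eq this
  · intro c f hf
    obtain ⟨C, hC⟩ := (bdd_range_iff _).mp hf
    have hb : ∃ C, ∀ x : ℤ, |f (Multiplicative.ofAdd x)| ≤ C := ⟨C, fun x => hC _⟩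
    have : Tendsto (avg (fun k => (c • f) (Multiplicative.ofAdd k))) (U : Filter ℕ)
        (nhds (c * mz (fun k => f (Multiplicative.ofAdd k)))) := by
      have heq : (avg (fun k => (c • f) (Multiplicative.ofAdd k))) = fun n =>
          c * avg (fun k => f (Multiplicative.ofAdd k)) n := by
        funext n
        exact avg_smul _ _ n
      rw [heq]
      exact (tendsto_mz hb).const_mul c
    exact mz_eq this
  · intro f hf hf0
    obtain ⟨C, hC⟩ := (bdd_range_iff _).mp hf
    have hb : ∃ C, ∀ x : ℤ, |f (Multiplicative.ofAdd x)| ≤ C := ⟨C, fun x => hC _⟩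
    refine ge_of_tendsto' (tendsto_mz hb) (fun n => ?_)
    rw [avg]
    have : 0 ≤ ∑ k ∈ Finset.range n, f (Multiplicative.ofAdd (k:ℤ)) :=
      Finset.sum_nonneg (fun k _ => hf0 _)
    positivity
  · have : Tendsto (avg (fun _ : ℤ => (1:ℝ))) atTop (nhds 1) := by
      have heq : ∀ᶠ n in (atTop : Filter ℕ), avg (fun _ : ℤ => (1:ℝ)) n = 1 := by
        filter_upwards [Filter.eventually_ge_atTop 1] with n hn
        rw [avg]
        rw [Finset.sum_const, Finset.card_range]
        field_simp
        simp
      exact Tendsto.congr' (EventuallyEq.symm heq) tendsto_const_nhds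
    exact mz_eq (this.mono_left U_le)
  · intro g f hf
    obtain ⟨C, hC⟩ := (bdd_range_iff _).mp hf
    have hb : ∃ C, ∀ x : ℤ, |f (Multiplicative.ofAdd x)| ≤ C := ⟨C, fun x => hC _⟩
    have heq : (fun k => (fun x => f (g * x)) (Multiplicative.ofAdd k)) =
        (fun k => (fun j => f (Multiplicative.ofAdd j)) (Multiplicative.toAdd g + k)) := by
      funext k
      rfl
    show mz (fun k => (fun x => f (g * x)) (Multiplicative.ofAdd k)) = _
    rw [heq]
    exact mz_shift hb _


namespace FPParadox

open Monoid.CoprodI Monoid.CoprodI.Word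

open Classical in
/-- indicator function -/
noncomputable def chi {G : Type*} (S : Set G) : G → ℝ :=
  fun g => if g ∈ S then 1 else 0

lemma chi_nonneg {G : Type*} (S : Set G) (g : G) : 0 ≤ chi S g := by
  rw [chi]; split <;> norm_num

lemma chi_abs_le {G : Type*} (S : Set G) (g : G) : |chi S g| ≤ 1 := by
  rw [chi]; split <;> norm_num

lemma chi_of_mem {G : Type*} {S : Set G} {g : G} (h : g ∈ S) : chi S g = 1 := by
  rw [chi, if_pos h]

lemma chi_of_not_mem {G : Type*} {S : Set G} {g : G} (h : g ∉ S) : chi S g = 0 := by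
  rw [chi, if_neg h]

variable {A : Bool → Type*} [∀ b, Group (A b)]

open Classical in
/-- exponent of the head letter of `g` at index `b` -/
noncomputable def hdz (σ : ∀ b, A b) (hgen : ∀ b (u : A b), ∃ n : ℤ, u = σ b ^ n)
    (b : Bool) (g : Monoid.CoprodI A) : ℤ :=
  (hgen b ((equivPair b (equiv g)).head)).choose

open Classical in
lemma hdz_spec (σ : ∀ b, A b) (hgen : ∀ b (u : A b), ∃ n : ℤ, u = σ b ^ n)
    (b : Bool) (g : Monoid.CoprodI A) :
    (equivPair b (equiv g)).head = σ b ^ (hdz σ hgen b g) :=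
  (hgen b ((equivPair b (equiv g)).head)).choose_spec

section

variable (σ : ∀ b, A b) (hσ : ∀ b, ∀ n : ℤ, σ b ^ n = 1 → n = 0)
  (hgen : ∀ b (u : A b), ∃ n : ℤ, u = σ b ^ n)

include hσ hgen

lemma hdz_uniq {b : Bool} {n n' : ℤ} (h : σ b ^ n = σ b ^ n') : n = n' := by
  have h0 : σ b ^ (n - n') = 1 := by
    rw [zpow_sub, h, mul_inv_cancel]
  have := hσ b (n - n') h0
  omega

open Classical in
lemma hdz_smul (b : Bool) (g : Monoid.CoprodI A) :
    hdz σ hgen b ((Monoid.CoprodI.of (σ b))⁻¹ * g) = hdz σ hgen b g - 1 := by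
  have h1 : equiv ((Monoid.CoprodI.of (σ b))⁻¹ * g) =
      Monoid.CoprodI.of ((σ b)⁻¹) • equiv g := by
    rw [map_inv]
    exact mul_smul _ g (Word.empty : Word A)
  apply hdz_uniq σ hσ hgen (b := b)
  rw [← hdz_spec σ hgen b _, h1, equivPair_smul_same]
  simp only [hdz_spec σ hgen b g]
  rw [zpow_sub, zpow_one]
  group

open Classical in
lemma hdz_zero_of_fstIdx {b : Bool} {g : Monoid.CoprodI A}
    (h : fstIdx (equiv g) ≠ some b) : hdz σ hgen b g = 0 := by
  apply hdz_uniq σ hσ hgen (b := b)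
  rw [← hdz_spec σ hgen b g, equivPair_eq_of_fstIdx_ne h]
  simp

open Classical in
lemma hdz_ne (g : Monoid.CoprodI A) (h1 : hdz σ hgen true g ≠ 0)
    (h2 : hdz σ hgen false g ≠ 0) : False := by
  by_cases hf : fstIdx (equiv g) = some true
  · exact h2 (hdz_zero_of_fstIdx σ hσ hgen (by rw [hf]; simp))
  · exact h1 (hdz_zero_of_fstIdx σ hσ hgen hf)

lemma not_isAmenable_coprodI : ¬ IsAmenable (Monoid.CoprodI A) := by
  rintro ⟨m, madd, msmul, mpos, mone, minv⟩
  have hbdd : ∀ f : Monoid.CoprodI A → ℝ, (∃ C, ∀ x, |f x| ≤ C) →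
      Bornology.IsBounded (Set.range f) := fun f hf => (bdd_range_iff f).mpr hf
  have hmono : ∀ f g : Monoid.CoprodI A → ℝ, (∃ C, ∀ x, |f x| ≤ C) → (∃ C, ∀ x, |g x| ≤ C) →
      (∀ x, f x ≤ g x) → m f ≤ m g := by
    rintro f g ⟨C, hC⟩ ⟨D, hD⟩ hle
    have hgf : ∃ E, ∀ x, |(g - f) x| ≤ E := by
      refine ⟨D + C, fun x => ?_⟩
      calc |(g - f) x| = |g x - f x| := rfl
        _ ≤ |g x| + |f x| := abs_sub _ _
        _ ≤ D + C := add_le_add (hD x) (hC x)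
    have h1 : g = f + (g - f) := by funext x; simp
    have h2 : m g = m f + m (g - f) := by
      conv_lhs => rw [h1]
      exact madd f (g - f) (hbdd f ⟨C, hC⟩) (hbdd _ hgf)
    have h3 : 0 ≤ m (g - f) :=
      mpos _ (hbdd _ hgf) (fun x => sub_nonneg.mpr (hle x))
    linarith
  have hχbdd : ∀ S : Set (Monoid.CoprodI A), ∃ C, ∀ x, |chi S x| ≤ C :=
    fun S => ⟨1, chi_abs_le S⟩
  have htrans : ∀ (g₀ : Monoid.CoprodI A) (S : Set (Monoid.CoprodI A)),
      m (chi {g | g₀ * g ∈ S}) = m (chi S) := by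
    intro g₀ S
    have h1 : (fun x => chi S (g₀ * x)) = chi {g | g₀ * g ∈ S} := by
      funext x
      by_cases h : g₀ * x ∈ S
      · rw [chi_of_mem h, chi_of_mem (by exact h)]
      · rw [chi_of_not_mem h, chi_of_not_mem (by exact h)]
    rw [← h1]
    exact minv g₀ (chi S) (hbdd _ (hχbdd S))
  -- the four sets
  set P : Bool → Set (Monoid.CoprodI A) := fun b => {g | 0 < hdz σ hgen b g} with hP
  set N : Bool → Set (Monoid.CoprodI A) := fun b => {g | hdz σ hgen b g < 0} with hN
  have hadd2 : ∀ (f₁ f₂ : Monoid.CoprodI A → ℝ), (∃ C, ∀ x, |f₁ x| ≤ C) →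
      (∃ C, ∀ x, |f₂ x| ≤ C) → ∃ C, ∀ x, |(f₁ + f₂) x| ≤ C := by
    rintro f₁ f₂ ⟨C₁, hC₁⟩ ⟨C₂, hC₂⟩
    exact ⟨C₁ + C₂, fun x => (abs_add_le _ _).trans (add_le_add (hC₁ x) (hC₂ x))⟩
  have hcover : ∀ b : Bool, (1:ℝ) ≤ m (chi (P b)) + m (chi (N b)) := by
    intro b
    have key : ∀ g : Monoid.CoprodI A,
        (1:ℝ) ≤ (chi (P b) + chi {g | (Monoid.CoprodI.of (σ b))⁻¹ * g ∈ N b}) g := by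
      intro g
      rw [Pi.add_apply]
      by_cases h : g ∈ P b
      · have := chi_nonneg {g | (Monoid.CoprodI.of (σ b))⁻¹ * g ∈ N b} g
        rw [chi_of_mem h]
        linarith
      · have h2 : g ∈ {g | (Monoid.CoprodI.of (σ b))⁻¹ * g ∈ N b} := by
          have hnot : ¬ (0 < hdz σ hgen b g) := h
          show hdz σ hgen b ((Monoid.CoprodI.of (σ b))⁻¹ * g) < 0
          rw [hdz_smul σ hσ hgen]
          omega
        have := chi_nonneg (P b) g
        rw [chi_of_mem h2]
        linarith
    have h1 : m (fun _ => (1:ℝ)) ≤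
        m (chi (P b) + chi {g | (Monoid.CoprodI.of (σ b))⁻¹ * g ∈ N b}) := by
      exact hmono _ _ ⟨1, fun x => by norm_num⟩
        (hadd2 _ _ (hχbdd _) (hχbdd _)) (fun x => key x)
    rw [mone] at h1
    rw [madd _ _ (hbdd _ (hχbdd _)) (hbdd _ (hχbdd _))] at h1
    rw [htrans ((Monoid.CoprodI.of (σ b))⁻¹) (N b)] at h1
    exact h1
  have hsum_le : ∀ g : Monoid.CoprodI A,
      (chi (P true) + chi (N true) + chi (P false) + chi (N false)) g ≤ 1 := by
    intro g
    simp only [Pi.add_apply]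
    have e : ∀ (b : Bool) (S : Set (Monoid.CoprodI A)), g ∈ S → (∀ g', g' ∈ S →
      hdz σ hgen b g' ≠ 0) → True := fun _ _ _ _ => trivial
    by_cases h1 : g ∈ P true
    · have hd1 : hdz σ hgen true g ≠ 0 := by
        have : (0:ℤ) < hdz σ hgen true g := h1
        omega
      have h2 : g ∉ N true := by
        intro hm
        have : hdz σ hgen true g < 0 := hm
        have : (0:ℤ) < hdz σ hgen true g := h1
        omega
      have h3 : g ∉ P false := by
        intro hm
        exact hdz_ne σ hσ hgen g hd1 (by have : (0:ℤ) < hdz σ hgen false g := hm; omega)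
      have h4 : g ∉ N false := by
        intro hm
        exact hdz_ne σ hσ hgen g hd1 (by have : hdz σ hgen false g < 0 := hm; omega)
      rw [chi_of_mem h1, chi_of_not_mem h2, chi_of_not_mem h3, chi_of_not_mem h4]
      norm_num
    · rw [chi_of_not_mem h1]
      by_cases h2 : g ∈ N true
      · have hd1 : hdz σ hgen true g ≠ 0 := by
          have : hdz σ hgen true g < 0 := h2
          omega
        have h3 : g ∉ P false := by
          intro hm
          exact hdz_ne σ hσ hgen g hd1 (by have : (0:ℤ) < hdz σ hgen false g := hm; omega)
        have h4 : g ∉ N false := by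
          intro hm
          exact hdz_ne σ hσ hgen g hd1 (by have : hdz σ hgen false g < 0 := hm; omega)
        rw [chi_of_mem h2, chi_of_not_mem h3, chi_of_not_mem h4]
        norm_num
      · rw [chi_of_not_mem h2]
        by_cases h3 : g ∈ P false
        · have h4 : g ∉ N false := by
            intro hm
            have : hdz σ hgen false g < 0 := hm
            have : (0:ℤ) < hdz σ hgen false g := h3
            omega
          rw [chi_of_mem h3, chi_of_not_mem h4]
          norm_num
        · rw [chi_of_not_mem h3]
          have := chi_abs_le (N false) g
          have := abs_le.mp this
          linarith [this.2]
  have hfour : m (chi (P true)) + m (chi (N true)) + m (chi (P false)) + m (chi (N false)) ≤ 1 := by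
    have hb2 := hadd2 _ _ (hχbdd (P true)) (hχbdd (N true))
    have hb3 := hadd2 _ _ hb2 (hχbdd (P false))
    have hb4 := hadd2 _ _ hb3 (hχbdd (N false))
    have key := hmono _ _ hb4 ⟨1, fun x => by norm_num⟩ hsum_le
    rw [mone] at key
    rw [madd _ _ (hbdd _ hb3) (hbdd _ (hχbdd _))] at key
    rw [madd _ _ (hbdd _ hb2) (hbdd _ (hχbdd _))] at key
    rw [madd _ _ (hbdd _ (hχbdd _)) (hbdd _ (hχbdd _))] at key
    exact key
  have c1 := hcover true
  have c2 := hcover false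
  linarith

end

end FPParadox


namespace FPPingPong
open Monoid.CoprodI Monoid.CoprodI.Word

variable {A : Bool → Type*} [∀ b, Group (A b)]

section Basic
variable [∀ b, DecidableEq (A b)]

lemma equiv_prod (w : Word A) : equiv (Word.prod w) = w :=
  (equiv (M := A)).apply_symm_apply w

lemma prod_equiv (g : Monoid.CoprodI A) : Word.prod (equiv g) = g :=
  (equiv (M := A)).symm_apply_apply g

lemma equiv_one : equiv (1 : Monoid.CoprodI A) = Word.empty := by
  have : (1 : Monoid.CoprodI A) = Word.prod Word.empty := rfl
  rw [this, equiv_prod]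

/-- head component at index `true` -/
def ch (g : Monoid.CoprodI A) : A true := (equivPair true (equiv g)).head

/-- tail component at index `true` -/
def tl (g : Monoid.CoprodI A) : Monoid.CoprodI A :=
  Word.prod (equivPair true (equiv g)).tail

lemma equiv_mul (u : A true) (g : Monoid.CoprodI A) :
    equiv (Monoid.CoprodI.of u * g) = Monoid.CoprodI.of u • equiv g :=
  mul_smul (Monoid.CoprodI.of u) g (Word.empty : Word A)

lemma ch_mul (u : A true) (g : Monoid.CoprodI A) :
    ch (Monoid.CoprodI.of u * g) = u * ch g := by
  rw [ch, ch, equiv_mul, equivPair_smul_same]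

lemma tl_mul (u : A true) (g : Monoid.CoprodI A) :
    tl (Monoid.CoprodI.of u * g) = tl g := by
  rw [tl, tl, equiv_mul, equivPair_smul_same]

lemma ch_tl (g : Monoid.CoprodI A) : g = Monoid.CoprodI.of (ch g) * tl g := by
  conv_lhs => rw [← prod_equiv g]
  have h2 : equiv g = Word.rcons (equivPair true (equiv g)) :=
    ((equivPair true).symm_apply_apply (equiv g)).symm
  rw [h2, prod_rcons]
  rfl

lemma fstIdx_equiv_tl (g : Monoid.CoprodI A) : fstIdx (equiv (tl g)) ≠ some true := by
  rw [tl, equiv_prod]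
  exact (equivPair true (equiv g)).fstIdx_ne

lemma ch_of_fstIdx {g : Monoid.CoprodI A} (h : fstIdx (equiv g) ≠ some true) : ch g = 1 := by
  rw [ch, equivPair_eq_of_fstIdx_ne h]

lemma ch_one : ch (1 : Monoid.CoprodI A) = 1 := by
  apply ch_of_fstIdx
  rw [equiv_one]
  simp [fstIdx, Word.empty]

lemma ch_of (u : A true) : ch (Monoid.CoprodI.of u) = u := by
  have := ch_mul u 1
  rw [mul_one] at this
  rw [this, ch_one, mul_one]

lemma fstIdx_toWord {i j : Bool} (W : NeWord A i j) : fstIdx W.toWord = some i := by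
  have h := W.toList_head?
  rw [fstIdx]
  have : W.toWord.toList = W.toList := rfl
  rw [this, h]
  rfl

/-- Key concatenation lemma: the normal form of `W.prod * of k * t` starts with
an `false`-indexed letter. -/
lemma fstIdx_concat (W : NeWord A false false) (k : A true) (hk : k ≠ 1)
    (t : Monoid.CoprodI A) (ht : fstIdx (equiv t) ≠ some true) :
    fstIdx (equiv (W.prod * Monoid.CoprodI.of k * t)) = some false := by
  set wt := equiv t with hwt
  -- the concatenated word
  have hne1 : ∀ l ∈ W.toList ++ ⟨true, k⟩ :: wt.toList, Sigma.snd l ≠ 1 := by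
    intro l hl
    rw [List.mem_append, List.mem_cons] at hl
    rcases hl with hl | rfl | hl
    · exact W.toWord.ne_one l hl
    · exact hk
    · exact wt.ne_one l hl
  have hchain : (W.toList ++ ⟨true, k⟩ :: wt.toList).Chain'
      (fun l l' => Sigma.fst l ≠ Sigma.fst l') := by
    show List.IsChain _ (_ ++ _)
    rw [List.isChain_append]
    refine ⟨W.toWord.chain_ne, ?_, ?_⟩
    · rw [List.isChain_cons]
      refine ⟨?_, wt.chain_ne⟩
      intro y hy
      have := fstIdx_ne_iff.mp ht y hy
      exact fun hc => this hc
    · intro p hp q hq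
      rw [W.toList_getLast?, Option.mem_some_iff] at hp
      rw [List.head?_cons, Option.mem_some_iff] at hq
      subst hp
      subst hq
      simp
  set wall : Word A := ⟨W.toList ++ ⟨true, k⟩ :: wt.toList, hne1, hchain⟩ with hwall
  have hprod : Word.prod wall = W.prod * Monoid.CoprodI.of k * t := by
    rw [hwall]
    show List.prod (((W.toList ++ ⟨true, k⟩ :: wt.toList)).map fun l => Monoid.CoprodI.of l.snd)
      = _
    rw [List.map_append, List.prod_append, List.map_cons, List.prod_cons]
    have h1 : List.prod (W.toList.map fun l => Monoid.CoprodI.of l.snd) = W.prod := rfl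
    have h2 : List.prod (wt.toList.map fun l => Monoid.CoprodI.of l.snd) = t := by
      have : List.prod (wt.toList.map fun l => Monoid.CoprodI.of l.snd) = Word.prod wt := rfl
      rw [this, hwt, prod_equiv]
    rw [h1, h2, mul_assoc]
  rw [← hprod, equiv_prod, hwall]
  show ((W.toList ++ ⟨true, k⟩ :: wt.toList).head?.map Sigma.fst) = some false
  have hW : W.toList ≠ [] := W.toList_ne_nil
  rcases hl : W.toList with _ | ⟨a, l₂⟩
  · exact absurd hl hW
  · have := W.toList_head?
    rw [hl] at this
    simp only [List.head?_cons, Option.some.injEq] at this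
    rw [List.cons_append, List.head?_cons, this]
    rfl

/-- Build a `NeWord A false false` out of a suitable list. -/
lemma of_list (l : List (Σ b, A b)) (hnil : l ≠ []) (h1 : ∀ a ∈ l, a.2 ≠ 1)
    (hch : l.Chain' (fun a b => a.1 ≠ b.1)) (hhd : (l.head hnil).1 = false)
    (hlast : (l.getLast hnil).1 = false) :
    ∃ W : NeWord A false false, W.toList = l := by
  set w : Word A := ⟨l, h1, hch⟩ with hw
  have hwne : w ≠ Word.empty := by
    intro hcon
    apply hnil
    have : w.toList = (Word.empty : Word A).toList := by rw [hcon]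
    simpa [hw, Word.empty] using this
  obtain ⟨i, j, W, hW⟩ := NeWord.of_word w hwne
  have hWl : W.toList = l := by
    have : W.toWord.toList = w.toList := by rw [hW]
    simp [hw] at this
    exact this
  have hi : i = false := by
    have h := W.toList_head?
    rw [hWl, List.head?_eq_head hnil] at h
    have h2 : l.head hnil = ⟨i, W.head⟩ := Option.some_injective _ h
    have h3 := congrArg Sigma.fst h2
    rw [hhd] at h3
    simpa using h3.symm
  have hj : j = false := by
    have h := W.toList_getLast?
    rw [hWl, List.getLast?_eq_getLast hnil] at h
    have h2 : l.getLast hnil = ⟨j, W.last⟩ := Option.some_injective _ h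
    have h3 := congrArg Sigma.fst h2
    rw [hlast] at h3
    simpa using h3.symm
  subst hi
  subst hj
  exact ⟨W, hWl⟩

lemma neword_prod (W : NeWord A false false) :
    W.prod = List.prod (W.toList.map fun l => Monoid.CoprodI.of l.snd) := rfl

/-- strip the (possible) head letter at index `true` -/
lemma decomp_front (l : List (Σ b, A b)) (hnil : l ≠ []) (h1 : ∀ a ∈ l, a.2 ≠ 1)
    (hch : l.Chain' (fun a b => a.1 ≠ b.1)) (hlast : (l.getLast hnil).1 = false) :
    ∃ (k₀ : A true) (W : NeWord A false false),
      List.prod (l.map fun a => Monoid.CoprodI.of a.snd) = Monoid.CoprodI.of k₀ * W.prod := by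
  rcases l with _ | ⟨a, l₂⟩
  · exact absurd rfl hnil
  obtain ⟨b, u⟩ := a
  cases b
  · -- head letter has index false, take k₀ = 1
    obtain ⟨W, hW⟩ := of_list (⟨false, u⟩ :: l₂) (by simp) h1 hch rfl hlast
    refine ⟨1, W, ?_⟩
    rw [map_one, one_mul, neword_prod, hW]
  · -- head letter has index true
    have hl₂ : l₂ ≠ [] := by
      rintro rfl
      simp at hlast
    have hch₂ : l₂.Chain' (fun a b => a.1 ≠ b.1) := (List.isChain_cons.mp hch).2
    have hh₂ : ∀ y ∈ l₂.head?, (⟨true, u⟩ : Σ b, A b).1 ≠ y.1 := (List.isChain_cons.mp hch).1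
    have hhd₂ : (l₂.head hl₂).1 = false := by
      have := hh₂ (l₂.head hl₂) (List.head?_eq_head hl₂ ▸ rfl)
      simp only at this
      cases hb : (l₂.head hl₂).1
      · rfl
      · exact absurd hb.symm this
    have hlast₂ : (l₂.getLast hl₂).1 = false := by
      have : (⟨true, u⟩ :: l₂).getLast (by simp) = l₂.getLast hl₂ := List.getLast_cons hl₂
      rw [← this]
      exact hlast
    obtain ⟨W, hW⟩ := of_list l₂ hl₂ (fun a ha => h1 a (List.mem_cons_of_mem _ ha)) hch₂ hhd₂
      hlast₂
    refine ⟨u, W, ?_⟩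
    rw [List.map_cons, List.prod_cons, neword_prod, hW]

/-- Decomposition of an element not in the image of `A true`. -/
lemma decomp (x : Monoid.CoprodI A)
    (hx : x ∉ Set.range (Monoid.CoprodI.of (i := true) : A true →* Monoid.CoprodI A)) :
    ∃ (k₀ k' : A true) (W : NeWord A false false),
      x = Monoid.CoprodI.of k₀ * W.prod * Monoid.CoprodI.of k' := by
  have hxw : Word.prod (equiv x) = x := prod_equiv x
  set w := equiv x with hwdef
  have hl : w.toList ≠ [] := by
    intro hcon
    apply hx
    have : Word.prod w = 1 := by
      rw [Word.prod, hcon]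
      simp
    rw [hxw] at this
    exact ⟨1, by rw [map_one, this]⟩
  have hxl : x = List.prod (w.toList.map fun a => Monoid.CoprodI.of a.snd) := by
    rw [← hxw]
    rfl
  have hsplit : w.toList = w.toList.dropLast ++ [w.toList.getLast hl] :=
    (List.dropLast_append_getLast hl).symm
  rcases hlast' : w.toList.getLast hl with ⟨b, u⟩
  cases b
  · -- last letter at index false: no stripping on the right
    obtain ⟨k₀, W, hW⟩ := decomp_front w.toList hl w.ne_one w.chain_ne (by rw [hlast'])
    exact ⟨k₀, 1, W, by rw [hxl, hW, map_one, mul_one]⟩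
  · -- last letter at index true
    have hd' : w.toList.dropLast ≠ [] := by
      intro hcon
      apply hx
      have h5 : w.toList = [w.toList.getLast hl] := by
        conv_lhs => rw [← List.dropLast_append_getLast hl]
        rw [hcon]
        rfl
      rw [hlast'] at h5
      refine ⟨u, ?_⟩
      rw [hxl, h5]
      simp
    have hchsplit := w.chain_ne
    rw [hsplit] at hchsplit
    have hch₀ := (List.isChain_append.mp hchsplit).1
    have hjunc := (List.isChain_append.mp hchsplit).2.2
    have hlast₀ : (w.toList.dropLast.getLast hd').1 = false := by
      have h := hjunc (w.toList.dropLast.getLast hd')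
        (by rw [List.getLast?_eq_getLast hd']; rfl)
        (w.toList.getLast hl) (by rw [List.head?_cons]; rfl)
      rw [hlast'] at h
      cases hb : (w.toList.dropLast.getLast hd').1
      · rfl
      · exact absurd hb (by simpa using h)
    obtain ⟨k₀, W, hW⟩ := decomp_front w.toList.dropLast hd'
      (fun a ha => w.ne_one a (List.dropLast_subset _ ha)) hch₀ hlast₀
    refine ⟨k₀, u, W, ?_⟩
    rw [hxl]
    conv_lhs => rw [hsplit]
    rw [List.map_append, List.prod_append, hW, hlast']
    simp [mul_assoc]

open Pointwise in
theorem pingpong_free (h : A true) (hh : ∀ n : ℤ, h ^ n = 1 → n = 0)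
    (x : Monoid.CoprodI A)
    (hx : x ∉ Set.range (Monoid.CoprodI.of (i := true) : A true →* Monoid.CoprodI A)) :
    Function.Injective
      (Monoid.CoprodI.lift (fun b : Bool =>
        bif b then (Monoid.CoprodI.of (i := true)).comp (Subgroup.zpowers h).subtype
        else (MulAut.conj x).toMonoidHom.comp
          ((Monoid.CoprodI.of (i := true)).comp (Subgroup.zpowers h).subtype))) := by
  classical
  obtain ⟨k₀, k', W, hxdec⟩ := decomp x hx
  have hzpow : ∀ n : ℤ, n ≠ 0 → h ^ n ≠ 1 := fun n hn he => hn (hh n he)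
  set Xt : Set (Monoid.CoprodI A) := {g | ∃ a : ℤ, a ≠ 0 ∧ ch g = h ^ a * k₀} with hXt
  set Xf : Set (Monoid.CoprodI A) :=
    {g | ch g = k₀ ∧ g ≠ Monoid.CoprodI.of k₀} with hXf
  have hchW : ∀ g : Monoid.CoprodI A, fstIdx (equiv (W.prod)) ≠ some true := by
    intro _
    have he : equiv W.prod = W.toWord := equiv_prod W.toWord
    rw [he, fstIdx_toWord]
    simp
  refine lift_injective_of_ping_pong _ ?_ (fun b => bif b then Xt else Xf) ?_ ?_ ?_
  · -- cardinality
    refine Or.inr ⟨true, ?_⟩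
    have hinj : Function.Injective
        (fun n : ℤ => (⟨h ^ n, Subgroup.mem_zpowers_iff.mpr ⟨n, rfl⟩⟩ :
          Subgroup.zpowers h)) := by
      intro n m he
      have h1 : h ^ n = h ^ m := congrArg Subtype.val he
      have h0 : h ^ (n - m) = 1 := by rw [zpow_sub, h1, mul_inv_cancel]
      have := hh _ h0
      omega
    have : Infinite (Subgroup.zpowers h) := Infinite.of_injective _ hinj
    calc (3 : Cardinal) = ((3:ℕ) : Cardinal) := by norm_num
      _ ≤ Cardinal.aleph0 := (Cardinal.nat_lt_aleph0 3).le
      _ ≤ Cardinal.mk (Subgroup.zpowers h) := Cardinal.aleph0_le_mk _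
  · -- nonempty
    intro b
    cases b
    · refine ⟨Monoid.CoprodI.of k₀ * W.prod, ?_, ?_⟩
      · show ch (Monoid.CoprodI.of k₀ * W.prod) = k₀
        rw [ch_mul, ch_of_fstIdx (hchW 1), mul_one]
      · intro hcon
        have h1 : W.prod = 1 := by
          apply mul_left_cancel (a := Monoid.CoprodI.of k₀)
          rw [hcon, mul_one]
        have h2 : equiv W.prod = Word.empty := by rw [h1, equiv_one]
        have h3 : equiv W.prod = W.toWord := equiv_prod W.toWord
        rw [h3] at h2
        exact W.toList_ne_nil (congrArg Word.toList h2)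
    · exact ⟨Monoid.CoprodI.of (h ^ (1:ℤ) * k₀), 1, one_ne_zero, by rw [ch_of]⟩
  · -- disjoint
    have hdisj : Disjoint Xt Xf := by
      rw [Set.disjoint_left]
      rintro g ⟨a, ha0, hcg⟩ ⟨hcg', -⟩
      have h1 : h ^ a * k₀ = 1 * k₀ := by rw [one_mul, ← hcg, hcg']
      exact hzpow a ha0 (mul_right_cancel h1)
    intro i j hij
    cases i <;> cases j
    · exact absurd rfl hij
    · exact hdisj.symm
    · exact hdisj
    · exact absurd rfl hij
  · -- ping pong
    intro i j hij
    cases i <;> cases j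
    · exact absurd rfl hij
    · -- i = false, j = true : conjugated powers map Xt into Xf
      intro u hu
      simp only [Bool.cond_false, Bool.cond_true]
      rintro _ ⟨g, hg, rfl⟩
      show ((MulAut.conj x).toMonoidHom.comp
        ((Monoid.CoprodI.of (i := true)).comp (Subgroup.zpowers h).subtype)) u • g ∈ Xf
      obtain ⟨n, hn⟩ := Subgroup.mem_zpowers_iff.mp u.2
      have hn0 : n ≠ 0 := by
        rintro rfl
        apply hu
        have : (u : A true) = 1 := by rw [← hn, zpow_zero]
        exact OneMemClass.coe_eq_one.mp this
      obtain ⟨a, ha0, hcg⟩ := hg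
      have hc₁ : k' * h ^ n * k'⁻¹ ≠ 1 := by
        intro e
        have h1 : h ^ n = k'⁻¹ * (k' * h ^ n * k'⁻¹) * k' := by group
        rw [e] at h1
        simp only [mul_one, one_mul, inv_mul_cancel] at h1
        exact hzpow n hn0 h1
      have hc₂ : k₀⁻¹ * (h ^ a * k₀) ≠ 1 := by
        intro e
        have h1 : h ^ a = k₀ * (k₀⁻¹ * (h ^ a * k₀)) * k₀⁻¹ := by group
        rw [e] at h1
        simp only [mul_one, one_mul, mul_inv_cancel] at h1
        exact hzpow a ha0 h1
      set R : NeWord A false false :=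
        NeWord.append (NeWord.append W Bool.false_ne_true
          (NeWord.singleton (k' * h ^ n * k'⁻¹) hc₁)) (by simp) W.inv with hRdef
      have hR : R.prod = W.prod * Monoid.CoprodI.of (k' * h ^ n * k'⁻¹) * W.prod⁻¹ := by
        rw [hRdef]
        rw [NeWord.append_prod, NeWord.append_prod, NeWord.prod_singleton, NeWord.inv_prod]
      have key := fstIdx_concat R (k₀⁻¹ * (h ^ a * k₀)) hc₂ (tl g) (fstIdx_equiv_tl g)
      have hgdec : g = Monoid.CoprodI.of (h ^ a * k₀) * tl g := by
        conv_lhs => rw [ch_tl g]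
        rw [hcg]
      have happ : ((MulAut.conj x).toMonoidHom.comp
            ((Monoid.CoprodI.of (i := true)).comp (Subgroup.zpowers h).subtype)) u • g
          = x * Monoid.CoprodI.of (h ^ n) * x⁻¹ * g := by
        rw [smul_eq_mul]
        congr 1
        show MulAut.conj x (Monoid.CoprodI.of (u : A true)) = _
        rw [MulAut.conj_apply, ← hn]
      have heq : x * Monoid.CoprodI.of (h ^ n) * x⁻¹ * g
          = Monoid.CoprodI.of k₀ *
            (R.prod * Monoid.CoprodI.of (k₀⁻¹ * (h ^ a * k₀)) * tl g) := by
        conv_lhs => rw [hxdec, hgdec]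
        conv_rhs => rw [hR]
        simp only [map_mul, map_inv]
        group
      rw [happ, heq]
      constructor
      · rw [ch_mul, ch_of_fstIdx (by rw [key]; simp), mul_one]
      · intro hcon
        have h1 : R.prod * Monoid.CoprodI.of (k₀⁻¹ * (h ^ a * k₀)) * tl g = 1 := by
          apply mul_left_cancel (a := Monoid.CoprodI.of k₀)
          rw [hcon, mul_one]
        rw [h1, equiv_one] at key
        simp [fstIdx, Word.empty] at key
    · -- i = true, j = false : powers of h map Xf into Xt
      intro u hu
      simp only [Bool.cond_false, Bool.cond_true]
      rintro _ ⟨g, hg, rfl⟩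
      obtain ⟨n, hn⟩ := Subgroup.mem_zpowers_iff.mp u.2
      have hn0 : n ≠ 0 := by
        rintro rfl
        apply hu
        have : (u : A true) = 1 := by rw [← hn, zpow_zero]
        exact OneMemClass.coe_eq_one.mp this
      show ((Monoid.CoprodI.of (i := true)).comp (Subgroup.zpowers h).subtype) u • g ∈ Xt
      refine ⟨n, hn0, ?_⟩
      have happ : ((Monoid.CoprodI.of (i := true)).comp (Subgroup.zpowers h).subtype) u • g
          = Monoid.CoprodI.of (h ^ n) * g := by
        rw [smul_eq_mul]
        congr 1
        show Monoid.CoprodI.of ((Subgroup.zpowers h).subtype u) = _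
        congr 1
        exact hn.symm
      rw [happ, ch_mul, hg.1]
    · exact absurd rfl hij

end Basic

end FPPingPong


section Glue
universe u v

lemma torsionfree_zpow {G : Type*} [Group G] (ht : Monoid.IsTorsionFree G) {g : G}
    (hg : g ≠ 1) : ∀ n : ℤ, g ^ n = 1 → n = 0 := by
  intro n hn
  by_contra h0
  apply ht g hg
  refine isOfFinOrder_iff_pow_eq_one.mpr ⟨n.natAbs, by omega, ?_⟩
  have h1 : g ^ ((n.natAbs : ℤ)) = 1 := by
    rcases Int.natAbs_eq n with he | he
    · rw [← he, hn]
    · rw [show ((n.natAbs : ℤ)) = -n by omega, zpow_neg, hn, inv_one]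
  rw [← zpow_natCast]
  exact h1

/-- The two-indexed family for the binary free product. -/
@[reducible] def Fam (K : Type u) (L : Type v) : Bool → Type (max u v) :=
  fun b => bif b then ULift.{v} K else ULift.{u} L

variable (K : Type u) (L : Type v) [Group K] [Group L]

instance : ∀ b, Group (Fam K L b)
  | true => ULift.group
  | false => ULift.group

/-- the canonical map `K → Fam K L true` as a `MonoidHom` -/
def upK : K →* Fam K L true := (MulEquiv.ulift (α := K)).symm.toMonoidHom

def upL : L →* Fam K L false := (MulEquiv.ulift (α := L)).symm.toMonoidHom

/-- from the binary coproduct to the indexed one -/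
def toI : Monoid.Coprod K L →* Monoid.CoprodI (Fam K L) :=
  Monoid.Coprod.lift ((Monoid.CoprodI.of (i := true)).comp (upK K L))
    ((Monoid.CoprodI.of (i := false)).comp (upL K L))

def fromIFam : ∀ b, Fam K L b →* Monoid.Coprod K L
  | true => (Monoid.Coprod.inl).comp (MulEquiv.ulift (α := K)).toMonoidHom
  | false => (Monoid.Coprod.inr).comp (MulEquiv.ulift (α := L)).toMonoidHom

def fromI : Monoid.CoprodI (Fam K L) →* Monoid.Coprod K L :=
  Monoid.CoprodI.lift (fromIFam K L)

lemma fromI_comp_toI : (fromI K L).comp (toI K L) = MonoidHom.id _ := by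
  apply Monoid.Coprod.hom_ext
  · ext k
    simp only [MonoidHom.comp_apply, MonoidHom.id_apply, toI, Monoid.Coprod.lift_apply_inl]
    rw [fromI, Monoid.CoprodI.lift_of]
    show Monoid.Coprod.inl (MulEquiv.ulift (α := K) (upK K L k)) = Monoid.Coprod.inl k
    exact congrArg Monoid.Coprod.inl
      (MulEquiv.apply_symm_apply (MulEquiv.ulift : ULift.{v} K ≃* K) k)
  · ext l
    simp only [MonoidHom.comp_apply, MonoidHom.id_apply, toI, Monoid.Coprod.lift_apply_inr]
    rw [fromI, Monoid.CoprodI.lift_of]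
    show Monoid.Coprod.inr (MulEquiv.ulift (α := L) (upL K L l)) = Monoid.Coprod.inr l
    exact congrArg Monoid.Coprod.inr
      (MulEquiv.apply_symm_apply (MulEquiv.ulift : ULift.{u} L ≃* L) l)

lemma toI_comp_fromI : (toI K L).comp (fromI K L) = MonoidHom.id _ := by
  apply Monoid.CoprodI.ext_hom
  intro b
  cases b
  · ext l
    simp only [MonoidHom.comp_apply, MonoidHom.id_apply]
    rw [fromI, Monoid.CoprodI.lift_of]
    show (toI K L) (Monoid.Coprod.inr (MulEquiv.ulift l)) = _
    rw [toI, Monoid.Coprod.lift_apply_inr]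
    show Monoid.CoprodI.of (M := Fam K L) (i := false)
      ((MulEquiv.ulift (α := L)).symm (MulEquiv.ulift l)) = _
    rw [MulEquiv.symm_apply_apply]
  · ext k
    simp only [MonoidHom.comp_apply, MonoidHom.id_apply]
    rw [fromI, Monoid.CoprodI.lift_of]
    show (toI K L) (Monoid.Coprod.inl (MulEquiv.ulift k)) = _
    rw [toI, Monoid.Coprod.lift_apply_inl]
    show Monoid.CoprodI.of (M := Fam K L) (i := true)
      ((MulEquiv.ulift (α := K)).symm (MulEquiv.ulift k)) = _
    rw [MulEquiv.symm_apply_apply]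

/-- the equivalence between the two versions of the free product -/
noncomputable def cpEquiv : Monoid.Coprod K L ≃* Monoid.CoprodI (Fam K L) :=
  MonoidHom.toMulEquiv (toI K L) (fromI K L) (fromI_comp_toI K L) (toI_comp_fromI K L)

lemma cpEquiv_inl (k : K) :
    cpEquiv K L (Monoid.Coprod.inl k) = Monoid.CoprodI.of (i := true) (upK K L k) := by
  show toI K L (Monoid.Coprod.inl k) = _
  rw [toI, Monoid.Coprod.lift_apply_inl]
  rfl

lemma cpEquiv_symm_of (k : Fam K L true) :
    (cpEquiv K L).symm (Monoid.CoprodI.of (i := true) k) = Monoid.Coprod.inl k.down := by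
  show fromI K L (Monoid.CoprodI.of (i := true) k) = _
  rw [fromI, Monoid.CoprodI.lift_of]
  rfl

end Glue

theorem maximal_amenable_in_free_product (K L : Type*) [Group K] [Group L]
    [Countable K] [Countable L] (hK : Monoid.IsTorsionFree K) (hL : Monoid.IsTorsionFree L)
    (hKnt : Nontrivial K) (H : Subgroup K) (hH : MaximalAmenable H) :
    MaximalAmenable (H.map (Monoid.Coprod.inl : K →* Monoid.Coprod K L)) := by
  classical
  obtain ⟨hHam, hHmax⟩ := hH
  have hinlinj : Function.Injective (Monoid.Coprod.inl : K →* Monoid.Coprod K L) :=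
    Monoid.Coprod.inl_injective
  constructor
  · exact isAmenable_of_injective
      ((Subgroup.equivMapOfInjective H _ hinlinj).symm.toMonoidHom)
      (MulEquiv.injective _) hHam
  intro N hN hle
  -- H is nontrivial
  have hHne : ∃ h : K, h ∈ H ∧ h ≠ 1 := by
    by_contra hcon
    push_neg at hcon
    obtain ⟨g, hg1⟩ := exists_ne (1 : K)
    have hord : ∀ n : ℤ, g ^ n = 1 → n = 0 := torsionfree_zpow hK hg1
    have hzam : IsAmenable (Subgroup.zpowers g) := by
      have hψinj : Function.Injective
          (fun n : Multiplicative ℤ =>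
            (⟨g ^ (Multiplicative.toAdd n), Subgroup.mem_zpowers_iff.mpr ⟨_, rfl⟩⟩ :
              Subgroup.zpowers g)) := by
        intro a b hab
        have h1 : g ^ (Multiplicative.toAdd a) = g ^ (Multiplicative.toAdd b) :=
          congrArg Subtype.val hab
        have h2 : g ^ (Multiplicative.toAdd a - Multiplicative.toAdd b) = 1 := by
          rw [zpow_sub, h1, mul_inv_cancel]
        have := hord _ h2
        have h3 : Multiplicative.toAdd a = Multiplicative.toAdd b := by omega
        exact Multiplicative.toAdd.injective h3
      let ψ : Multiplicative ℤ →* Subgroup.zpowers g :=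
        { toFun := fun n => ⟨g ^ (Multiplicative.toAdd n),
            Subgroup.mem_zpowers_iff.mpr ⟨_, rfl⟩⟩
          map_one' := by ext; simp
          map_mul' := fun a b => by ext; simp [zpow_add] }
      have hψsurj : Function.Surjective ψ := by
        rintro ⟨u, hu⟩
        obtain ⟨n, hn⟩ := Subgroup.mem_zpowers_iff.mp hu
        exact ⟨Multiplicative.ofAdd n, by ext; simpa [ψ] using hn⟩
      exact isAmenable_of_injective
        (MulEquiv.ofBijective ψ ⟨hψinj, hψsurj⟩).symm.toMonoidHom
        (MulEquiv.injective _) isAmenable_multiplicative_int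
    have hHz := hHmax (Subgroup.zpowers g) hzam
      (fun k hk => by rw [hcon k hk]; exact Subgroup.one_mem _)
    exact hg1 (hcon g (hHz ▸ Subgroup.mem_zpowers g))
  obtain ⟨h, hhH, hh1⟩ := hHne
  have hord : ∀ n : ℤ, h ^ n = 1 → n = 0 := torsionfree_zpow hK hh1
  -- N is contained in the image of K
  have hNle : ∀ y ∈ N, y ∈ Set.range (Monoid.Coprod.inl : K →* Monoid.Coprod K L) := by
    intro y hyN
    by_contra hy
    set e := cpEquiv K L with hedef
    set x : Monoid.CoprodI (Fam K L) := e y with hxdef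
    set h' : Fam K L true := upK K L h with hh'def
    have hupinj : Function.Injective (upK K L) := (MulEquiv.ulift (α := K)).symm.injective
    have hord' : ∀ n : ℤ, h' ^ n = 1 → n = 0 := by
      intro n hn
      apply hord
      apply hupinj
      rw [map_zpow, hn, map_one]
    have hx : x ∉ Set.range (Monoid.CoprodI.of (i := true) :
        Fam K L true →* Monoid.CoprodI (Fam K L)) := by
      rintro ⟨k, hk⟩
      apply hy
      refine ⟨k.down, ?_⟩
      have h2 := congrArg e.symm hk
      rw [hxdef, MulEquiv.symm_apply_apply] at h2
      rw [← h2]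
      exact cpEquiv_symm_of K L k
    have hppinj := FPPingPong.pingpong_free (A := Fam K L) h' hord' x hx
    -- elements of `zpowers h'` give elements of N
    have hinlhN : Monoid.Coprod.inl h ∈ N :=
      hle (Subgroup.mem_map.mpr ⟨h, hhH, rfl⟩)
    have hdownmem : ∀ u : Subgroup.zpowers h',
        Monoid.Coprod.inl ((u : Fam K L true).down) ∈ N := by
      intro u
      obtain ⟨n, hn⟩ := Subgroup.mem_zpowers_iff.mp u.2
      have hdn : ((u : Fam K L true)).down = h ^ n := by
        rw [← hn, hh'def]
        rfl
      rw [hdn, map_zpow]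
      exact Subgroup.zpow_mem N hinlhN n
    let j₁N : Subgroup.zpowers h' →* N :=
      { toFun := fun u => ⟨Monoid.Coprod.inl ((u : Fam K L true).down), hdownmem u⟩
        map_one' := by ext; simp
        map_mul' := fun a b => by ext; simp }
    let j₂N : Subgroup.zpowers h' →* N :=
      { toFun := fun u => ⟨y * Monoid.Coprod.inl ((u : Fam K L true).down) * y⁻¹,
          Subgroup.mul_mem _ (Subgroup.mul_mem _ hyN (hdownmem u)) (Subgroup.inv_mem _ hyN)⟩
        map_one' := by ext; simp
        map_mul' := fun a b => by
          ext
          show y * Monoid.Coprod.inl ((a * b : Subgroup.zpowers h') : Fam K L true).down * y⁻¹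
            = (y * Monoid.Coprod.inl ((a : Fam K L true)).down * y⁻¹) *
              (y * Monoid.Coprod.inl ((b : Fam K L true)).down * y⁻¹)
          have hab : ((a * b : Subgroup.zpowers h') : Fam K L true).down
              = ((a : Fam K L true)).down * ((b : Fam K L true)).down := rfl
          rw [hab, map_mul]
          group }
    let ψN : Monoid.CoprodI (fun _ : Bool => ↥(Subgroup.zpowers h')) →* N :=
      Monoid.CoprodI.lift (fun b => bif b then j₁N else j₂N)
    have hfact : N.subtype.comp ψN =
        (e.symm.toMonoidHom.comp
          (Monoid.CoprodI.lift (fun b : Bool =>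
            bif b then (Monoid.CoprodI.of (i := true)).comp (Subgroup.zpowers h').subtype
            else (MulAut.conj x).toMonoidHom.comp
              ((Monoid.CoprodI.of (i := true)).comp (Subgroup.zpowers h').subtype)))) := by
      apply Monoid.CoprodI.ext_hom
      intro b
      cases b
      · ext u
        simp only [MonoidHom.comp_apply, Monoid.CoprodI.lift_of, Bool.cond_false]
        show y * Monoid.Coprod.inl ((u : Fam K L true)).down * y⁻¹ = _
        have hex : e.symm x = y := by rw [hxdef, MulEquiv.symm_apply_apply]
        show _ = e.symm ((MulAut.conj x) (Monoid.CoprodI.of (i := true)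
          ((Subgroup.zpowers h').subtype u)))
        rw [MulAut.conj_apply, map_mul, map_mul, map_inv, hex]
        congr 2 <;> exact (cpEquiv_symm_of K L (u : Fam K L true)).symm
      · ext u
        simp only [MonoidHom.comp_apply, Monoid.CoprodI.lift_of, Bool.cond_true]
        show Monoid.Coprod.inl ((u : Fam K L true)).down = _
        exact (cpEquiv_symm_of K L (u : Fam K L true)).symm
    have hψNinj : Function.Injective ψN := by
      have hcompinj : Function.Injective (N.subtype.comp ψN) := by
        rw [hfact]
        rw [MonoidHom.coe_comp]
        exact e.symm.injective.comp hppinj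
      intro a b hab
      exact hcompinj (by rw [MonoidHom.comp_apply, MonoidHom.comp_apply, hab])
    -- contradiction with amenability
    apply FPParadox.not_isAmenable_coprodI (A := fun _ : Bool => ↥(Subgroup.zpowers h'))
      (fun _ => ⟨h', Subgroup.mem_zpowers h'⟩)
    · intro b n hn
      apply hord'
      have := congrArg (Subtype.val) hn
      simpa using this
    · intro b u
      obtain ⟨n, hn⟩ := Subgroup.mem_zpowers_iff.mp u.2
      refine ⟨n, ?_⟩
      ext
      simpa using hn.symm
    · exact isAmenable_of_injective ψN hψNinj hN
  -- conclude
  have hNrange : N ≤ (Monoid.Coprod.inl : K →* Monoid.Coprod K L).range := by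
    intro y hy
    exact MonoidHom.mem_range.mpr (hNle y hy)
  have hmapN : Subgroup.map Monoid.Coprod.inl (N.comap Monoid.Coprod.inl) = N :=
    Subgroup.map_comap_eq_self hNrange
  have hHle' : H ≤ N.comap Monoid.Coprod.inl := by
    intro k hk
    exact Subgroup.mem_comap.mpr (hle (Subgroup.mem_map.mpr ⟨k, hk, rfl⟩))
  have hN'am : IsAmenable (N.comap (Monoid.Coprod.inl : K →* Monoid.Coprod K L)) := by
    let φ : (N.comap (Monoid.Coprod.inl : K →* Monoid.Coprod K L)) →* N :=
      { toFun := fun u => ⟨Monoid.Coprod.inl (u : K), u.2⟩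
        map_one' := by ext; simp
        map_mul' := fun a b => by ext; simp }
    have hφinj : Function.Injective φ := by
      intro a b hab
      have := congrArg Subtype.val hab
      simp only [φ] at this
      exact Subtype.ext (hinlinj this)
    exact isAmenable_of_injective φ hφinj hN
  have hfinal := hHmax _ hN'am hHle'
  rw [← hfinal]
  exact hmapN.symm
end

section
/- Let K and L be torsion-free groups and let G = K * L be their free product. For every g ∈ G which does not lie in the image of the canonical inclusion of K, the group homomorphism from the free product K * ℤ to G which restricts to the canonical inclusion of K and sends a generator of ℤ to g is injective. -/
open Monoid Monoid.CoprodI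

namespace FOF

universe w

variable {A B : Type w} [Group A] [Group B]

/-- The two-element family of groups. -/
abbrev Fam (A B : Type w) : Bool → Type w := fun b => Bool.rec B A b

instance famGroup : ∀ b, Group (Fam A B b) := fun b =>
  Bool.rec (motive := fun b => Group (Fam A B b)) ‹Group B› ‹Group A› b

/-- `SW i j x` : `x` is the product of a nonempty reduced word starting with a letter
of index `i` and ending with a letter of index `j`. -/
def SW (i j : Bool) (x : CoprodI (Fam A B)) : Prop :=
  ∃ w : NeWord (Fam A B) i j, w.prod = x

theorem word_prod_inj {ι : Type*} {M : ι → Type*} [∀ i, Monoid (M i)]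
    {w₁ w₂ : Word M} (h : w₁.prod = w₂.prod) : w₁ = w₂ := by
  classical
  have h1 : Word.equiv (M := M) w₁.prod = w₁ := Word.equiv.apply_symm_apply w₁
  have h2 : Word.equiv (M := M) w₂.prod = w₂ := Word.equiv.apply_symm_apply w₂
  rw [← h1, ← h2, h]

theorem SW.ne_one {i j} {x : CoprodI (Fam A B)} (h : SW i j x) : x ≠ 1 := by
  obtain ⟨w, rfl⟩ := h
  intro h1
  have : w.toWord = Word.empty := word_prod_inj (by simpa [NeWord.prod] using h1)
  exact w.toList_ne_nil (by rw [show w.toList = w.toWord.toList from rfl, this]; rfl)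

theorem SW.fst_eq {i j i' j'} {x : CoprodI (Fam A B)} (h : SW i j x) (h' : SW i' j' x) :
    i = i' := by
  obtain ⟨w, rfl⟩ := h
  obtain ⟨w', hw'⟩ := h'
  have hW : w'.toWord = w.toWord := word_prod_inj hw'
  have h1 := w.toList_head?
  have h2 := w'.toList_head?
  rw [show w'.toList = w'.toWord.toList from rfl, hW,
    show w.toWord.toList = w.toList from rfl, h1] at h2
  exact (Sigma.mk.inj_iff.1 (Option.some.inj h2)).1

theorem SW.mul {i j k l} {x y : CoprodI (Fam A B)} (hx : SW i j x) (hy : SW k l y)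
    (h : j ≠ k) : SW i l (x * y) := by
  obtain ⟨w, rfl⟩ := hx
  obtain ⟨w', rfl⟩ := hy
  exact ⟨w.append h w', by rw [NeWord.append_prod]⟩

theorem SW.inv {i j} {x : CoprodI (Fam A B)} (hx : SW i j x) : SW j i x⁻¹ := by
  obtain ⟨w, rfl⟩ := hx
  exact ⟨w.inv, by rw [NeWord.inv_prod]⟩

theorem SW.single {i} {x : Fam A B i} (hx : x ≠ 1) : SW i i (CoprodI.of x) :=
  ⟨NeWord.singleton x hx, by rw [NeWord.prod_singleton]⟩

theorem SW.pow_succ {i j} {u : CoprodI (Fam A B)} (hu : SW i j u) (hij : j ≠ i) :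
    ∀ k : ℕ, SW i j (u ^ (k + 1)) := by
  intro k
  induction k with
  | zero => simpa using hu
  | succ k ih => rw [_root_.pow_succ]; exact ih.mul hu hij

theorem inv_toList_length {G : Bool → Type w} [∀ b, Group (G b)] :
    ∀ {i j} (w : NeWord G i j), w.inv.toList.length = w.toList.length := by
  intro i j w
  induction w with
  | singleton x h => rfl
  | append w₁ hne w₂ ih₁ ih₂ =>
      show (NeWord.append w₂.inv hne.symm w₁.inv).toList.length = _
      simp only [NeWord.toList, List.length_append] at *
      omega

theorem strip : ∀ {p q : Bool} (w : NeWord (Fam A B) p q),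
    (∃ x : Fam A B p, x ≠ 1 ∧ w.prod = CoprodI.of x ∧ p = q ∧ w.toList.length = 1) ∨
    ∃ (x : Fam A B p) (w' : NeWord (Fam A B) (!p) q), x ≠ 1 ∧
      w.prod = CoprodI.of x * w'.prod ∧ w'.toList.length + 1 = w.toList.length
  | _, _, .singleton x h => Or.inl ⟨x, h, by rw [NeWord.prod_singleton], rfl, rfl⟩
  | p, q, .append (j := j₁) (k := k₁) w₁ hne w₂ => by
      rcases strip w₁ with ⟨x, hx, hp, rfl, hl⟩ | ⟨x, w', hx, hp, hl⟩
      · have hk : k₁ = !p := by revert hne; cases p <;> cases k₁ <;> simp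
        subst hk
        refine Or.inr ⟨x, w₂, hx, ?_, ?_⟩
        · rw [NeWord.append_prod, hp]
        · show w₂.toList.length + 1 = (w₁.toList ++ w₂.toList).length
          rw [List.length_append, hl]
          omega
      · refine Or.inr ⟨x, w'.append hne w₂, hx, ?_, ?_⟩
        · rw [NeWord.append_prod, NeWord.append_prod, hp, mul_assoc]
        · show (w'.toList ++ w₂.toList).length + 1 = (w₁.toList ++ w₂.toList).length
          rw [List.length_append, List.length_append]
          omega

theorem tf_zpow_ne_one {G : Type*} [Group G] (hG : Monoid.IsTorsionFree G)
    {a : G} (ha : a ≠ 1) {n : ℤ} (hn : n ≠ 0) : a ^ n ≠ 1 := by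
  intro h
  refine hG a ha ?_
  have hnat : a ^ (n.natAbs) = 1 := by
    rcases Int.natAbs_eq n with he | he
    · rw [← zpow_natCast, ← he, h]
    · rw [← zpow_natCast, ← neg_neg (n.natAbs : ℤ), ← he, zpow_neg, h, inv_one]
  exact isOfFinOrder_iff_pow_eq_one.2 ⟨n.natAbs, Int.natAbs_pos.2 hn, hnat⟩

theorem sw_zpow_pos (hTF : ∀ b, Monoid.IsTorsionFree (Fam A B b)) :
    ∀ (N : ℕ) (i : Bool) (x : CoprodI (Fam A B)) (w : NeWord (Fam A B) i i),
      w.toList.length ≤ N → w.prod = x → ∀ n : ℤ, 0 < n → SW i i (x ^ n) := by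
  intro N
  induction N using Nat.strong_induction_on with
  | _ N IH =>
  intro i x w hlen hprod n hn
  rcases strip w with ⟨a, ha, hp, -, -⟩ | ⟨a, w₁, ha, hp, hl₁⟩
  · -- x = of a
    subst hprod
    rw [hp, ← map_zpow]
    exact SW.single (tf_zpow_ne_one (hTF i) ha hn.ne')
  · -- x = of a * w₁.prod, w₁ : NeWord (!i) i
    rcases strip w₁.inv with ⟨b, hb, hq, hii, -⟩ | ⟨b, w₂, hb, hq, hl₂⟩
    · exact absurd hii (by cases i <;> simp)
    ·
      -- w₁.inv : NeWord i (!i), so strip gives w₂ : NeWord (!i) (!i)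
      rw [NeWord.inv_prod] at hq
      set m : CoprodI (Fam A B) := w₂.inv.prod with hm
      have hmSW : SW (!i) (!i) m := ⟨w₂.inv, rfl⟩
      have hw₁ : w₁.prod = m * CoprodI.of b⁻¹ := by
        have : w₁.prod = (CoprodI.of b * w₂.prod)⁻¹ := by
          rw [← hq, inv_inv]
        rw [this, mul_inv_rev, ← map_inv, hm, NeWord.inv_prod]
      have hx : x = CoprodI.of a * m * CoprodI.of b⁻¹ := by
        rw [← hprod, hp, hw₁, mul_assoc]
      have hlw₂ : w₂.inv.toList.length < N := by
        have e1 := inv_toList_length w₁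
        have e2 := inv_toList_length w₂
        omega
      by_cases hba : b⁻¹ * a = 1
      · -- conjugation case : x = of a * m * of a⁻¹
        have hab : (b⁻¹ : Fam A B i) = a⁻¹ := by
          rw [← one_mul a⁻¹, ← hba, mul_assoc, mul_inv_cancel, mul_one]
        have hxc : x = CoprodI.of a * m * (CoprodI.of a)⁻¹ := by
          rw [hx, hab, map_inv]
        have hmn : SW (!i) (!i) (m ^ n) :=
          IH w₂.inv.toList.length hlw₂ (!i) m w₂.inv le_rfl rfl n hn
        have hxn : x ^ n = CoprodI.of a * m ^ n * (CoprodI.of a)⁻¹ := by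
          rw [hxc]
          have := map_zpow (MulAut.conj (CoprodI.of a : CoprodI (Fam A B))).toMonoidHom m n
          simpa [MulAut.conj_apply] using this.symm
        rw [hxn]
        have h1 : SW i i (CoprodI.of a) := SW.single ha
        have h2 : SW i i ((CoprodI.of a : CoprodI (Fam A B))⁻¹) := by
          rw [← map_inv]; exact SW.single (inv_ne_one.2 ha)
        exact (h1.mul hmn (Bool.not_ne_self i).symm).mul h2 (Bool.not_ne_self i)
      · -- non-cancelling case
        set u : CoprodI (Fam A B) := m * CoprodI.of (b⁻¹ * a) with hu
        have huSW : SW (!i) i u := hmSW.mul (SW.single hba) (Bool.not_ne_self i)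
        have key : ∀ k : ℕ, x ^ (k + 1) = CoprodI.of a * u ^ k * m * CoprodI.of b⁻¹ := by
          intro k
          induction k with
          | zero => simpa using hx
          | succ k ih =>
              rw [pow_succ x, ih, hx, pow_succ u, hu]
              simp only [map_mul]
              group
        -- write n = k+1
        obtain ⟨k, hk⟩ : ∃ k : ℕ, n = ((k + 1 : ℕ) : ℤ) := by
          refine ⟨(n - 1).toNat, ?_⟩
          omega
        have hbinv : (b⁻¹ : Fam A B i) ≠ 1 := inv_ne_one.2 hb
        rcases Nat.eq_zero_or_pos k with rfl | hkpos
        · rw [hk, zpow_natCast, pow_one]; exact ⟨w, hprod⟩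
        · rw [hk, zpow_natCast, key k]
          obtain ⟨k', rfl⟩ := Nat.exists_eq_succ_of_ne_zero hkpos.ne'
          have huk : SW (!i) i (u ^ (k' + 1)) := huSW.pow_succ (Bool.not_ne_self i).symm k'
          have h1 : SW i i (CoprodI.of a) := SW.single ha
          exact (((h1.mul huk (Bool.not_ne_self i).symm).mul hmSW
            (Bool.not_ne_self i).symm).mul (SW.single hbinv) (Bool.not_ne_self i))

theorem SW.zpow (hA : Monoid.IsTorsionFree A) (hB : Monoid.IsTorsionFree B)
    {i} {x : CoprodI (Fam A B)} (h : SW i i x) {n : ℤ} (hn : n ≠ 0) : SW i i (x ^ n) := by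
  have hTF : ∀ b, Monoid.IsTorsionFree (Fam A B b) := fun b =>
    Bool.rec (motive := fun b => Monoid.IsTorsionFree (Fam A B b)) hB hA b
  obtain ⟨w, hw⟩ := h
  rcases hn.lt_or_gt with hneg | hpos
  · have := sw_zpow_pos hTF w.toList.length i x w le_rfl hw (-n) (by omega)
    have h2 := this.inv
    rwa [← zpow_neg, neg_neg] at h2
  · exact sw_zpow_pos hTF w.toList.length i x w le_rfl hw n hpos

theorem exists_conj (x : CoprodI (Fam A B))
    (hx : ∀ a : A, x ≠ CoprodI.of (M := Fam A B) (i := true) a) :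
    ∃ (a b : A), SW false false
      (CoprodI.of (M := Fam A B) (i := true) a * x * CoprodI.of (M := Fam A B) (i := true) b) := by
  classical
  -- get a NeWord representing x
  have hx1 : x ≠ 1 := by
    intro h
    exact hx 1 (by rw [h, map_one])
  obtain ⟨i, j, w, hw⟩ : ∃ (i : Bool) (j : Bool) (w : NeWord (Fam A B) i j), w.prod = x := by
    have hne : Word.equiv (M := Fam A B) x ≠ Word.empty := by
      intro h
      apply hx1
      have := congrArg (Word.equiv (M := Fam A B)).symm h
      rw [Equiv.symm_apply_apply] at this
      rw [this]; rfl
    obtain ⟨i, j, w', hw'⟩ := NeWord.of_word _ hne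
    refine ⟨i, j, w', ?_⟩
    show w'.toWord.prod = x
    rw [hw']
    exact (Word.equiv (M := Fam A B)).symm_apply_apply x
  -- peel off a leading `true` letter if necessary
  have step1 : ∃ (a : A) (j' : Bool) (y : CoprodI (Fam A B)),
      SW false j' y ∧ CoprodI.of (M := Fam A B) (i := true) a * x = y := by
    cases i with
    | false =>
        exact ⟨1, j, x, ⟨w, hw⟩, by rw [map_one, one_mul]⟩
    | true =>
        rcases strip w with ⟨c, hc, hp, -, -⟩ | ⟨c, w', hc, hp, -⟩
        · exact absurd (hw ▸ hp ▸ rfl : x = CoprodI.of c) (hx c)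
        · refine ⟨c⁻¹, j, w'.prod, ⟨w', rfl⟩, ?_⟩
          rw [← hw, hp, ← mul_assoc, ← map_mul, inv_mul_cancel, map_one, one_mul]
  obtain ⟨a, j', y, hy, hay⟩ := step1
  -- peel off a trailing `true` letter if necessary
  cases j' with
  | false =>
      refine ⟨a, 1, ?_⟩
      rw [map_one, mul_one, hay]
      exact hy
  | true =>
      obtain ⟨wy, hwy⟩ := hy
      rcases strip wy.inv with ⟨c, hc, hp, hii, -⟩ | ⟨c, w', hc, hp, -⟩
      · exact absurd hii (by simp)
      · -- wy.inv : NeWord true false, y⁻¹ = of c * w'.prod, w' : NeWord false false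
        refine ⟨a, c, ?_⟩
        have h1 : y * CoprodI.of (M := Fam A B) (i := true) c = w'.inv.prod := by
          rw [NeWord.inv_prod]
          have h2 : y⁻¹ = CoprodI.of (M := Fam A B) (i := true) c * w'.prod := by
            rw [← hwy, ← NeWord.inv_prod, hp]
          have h3 : w'.prod = (CoprodI.of (M := Fam A B) (i := true) c)⁻¹ * y⁻¹ := by
            rw [h2, ← mul_assoc, inv_mul_cancel, one_mul]
          rw [h3]
          simp
        rw [hay, h1]
        exact ⟨w'.inv, rfl⟩

/-- Combined lift of a pair of homomorphisms out of a binary coproduct. -/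
def pairLift {A C : Type w} [Group A] [Group C] {N : Type*} [Monoid N]
    (φ : A →* N) (ζ : C →* N) : CoprodI (Fam A C) →* N :=
  CoprodI.lift (fun b => Bool.rec (motive := fun b => Fam A C b →* N) ζ φ b)

@[simp] theorem pairLift_of_true {A C : Type w} [Group A] [Group C] {N : Type*} [Monoid N]
    (φ : A →* N) (ζ : C →* N) (y : A) :
    pairLift φ ζ (CoprodI.of (M := Fam A C) (i := true) y) = φ y := by
  rw [pairLift, CoprodI.lift_of]

@[simp] theorem pairLift_of_false {A C : Type w} [Group A] [Group C] {N : Type*} [Monoid N]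
    (φ : A →* N) (ζ : C →* N) (y : C) :
    pairLift φ ζ (CoprodI.of (M := Fam A C) (i := false) y) = ζ y := by
  rw [pairLift, CoprodI.lift_of]

theorem pair_hom_ext {A C : Type w} [Group A] [Group C] {N : Type*} [Monoid N]
    {f g : CoprodI (Fam A C) →* N}
    (h1 : f.comp (CoprodI.of (M := Fam A C) (i := true)) =
      g.comp (CoprodI.of (M := Fam A C) (i := true)))
    (h2 : f.comp (CoprodI.of (M := Fam A C) (i := false)) =
      g.comp (CoprodI.of (M := Fam A C) (i := false))) : f = g :=
  CoprodI.ext_hom f g (fun i => Bool.rec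
    (motive := fun i => f.comp (CoprodI.of (M := Fam A C) (i := i)) =
      g.comp (CoprodI.of (M := Fam A C) (i := i))) h2 h1 i)

/-- The heart of the matter : ping-pong. -/
theorem core {T : Type w} [Group T] (hT : (3 : Cardinal) ≤ Cardinal.mk T)
    (ζ : T →* CoprodI (Fam A B)) (hζ : ∀ t : T, t ≠ 1 → SW false false (ζ t)) :
    Function.Injective
      (pairLift (CoprodI.of (M := Fam A B) (i := true) : A →* CoprodI (Fam A B)) ζ) := by
  classical
  rw [pairLift]
  apply lift_injective_of_ping_pong _ (Or.inr ⟨false, hT⟩)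
    (X := fun b => Bool.rec (motive := fun _ => Set (CoprodI (Fam A B)))
      {z | ∃ j, SW false j z} (insert 1 {z | ∃ j, SW true j z}) b)
  · -- nonempty
    intro i
    cases i with
    | false =>
        obtain ⟨t, ht1, ht2⟩ := Cardinal.three_le hT 1 1
        exact ⟨ζ t, false, hζ t ht1⟩
    | true => exact ⟨1, Set.mem_insert 1 _⟩
  · -- disjoint
    intro i j hij
    have key : Disjoint (α := Set (CoprodI (Fam A B)))
        (insert 1 {z | ∃ j, SW true j z}) {z | ∃ j, SW false j z} := by
      rw [Set.disjoint_left]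
      rintro z (rfl | ⟨j₁, h1⟩) ⟨j₂, h2⟩
      · exact h2.ne_one rfl
      · exact Bool.noConfusion (h1.fst_eq h2)
    cases i <;> cases j
    · exact absurd rfl hij
    · exact key.symm
    · exact key
    · exact absurd rfl hij
  · -- ping pong
    intro i j hij
    cases i with
    | false =>
        intro t ht z hz
        rw [Set.mem_smul_set] at hz
        obtain ⟨y, hy, rfl⟩ := hz
        have hj : j = true := by revert hij; cases j <;> simp
        subst hj
        have hζt : SW false false (ζ t) := hζ t ht
        rcases hy with rfl | ⟨j₁, hy⟩
        · exact ⟨false, by simpa using hζt⟩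
        · refine ⟨j₁, ?_⟩
          have := hζt.mul hy (by simp)
          simpa using this
    | true =>
        intro k hk z hz
        rw [Set.mem_smul_set] at hz
        obtain ⟨y, hy, rfl⟩ := hz
        have hj : j = false := by revert hij; cases j <;> simp
        subst hj
        obtain ⟨j₁, hy⟩ := hy
        have hsw : SW true j₁ (CoprodI.of (M := Fam A B) (i := true) k * y) :=
          SW.mul (SW.single hk) hy (by decide)
        rw [smul_eq_mul]
        exact Set.mem_insert_of_mem _ ⟨j₁, hsw⟩

theorem ulift_isTorsionFree {M : Type*} [Group M] (h : Monoid.IsTorsionFree M) :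
    Monoid.IsTorsionFree (ULift.{w} M) := by
  intro g hg hfin
  have h2 : IsOfFinOrder ((MulEquiv.ulift.toMonoidHom : ULift M →* M) g) :=
    (MulEquiv.ulift.toMonoidHom : ULift M →* M).isOfFinOrder hfin
  have h3 : IsOfFinOrder g.down := h2
  refine h g.down ?_ h3
  intro e
  apply hg
  cases g
  exact congrArg ULift.up e

end FOF

universe u₁ u₂

theorem free_from_element_outside_factor' (K : Type u₁) (L : Type u₂) [Group K] [Group L]
    (hK : Monoid.IsTorsionFree K) (hL : Monoid.IsTorsionFree L)
    (g : Monoid.Coprod K L)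
    (hg : g ∉ (Monoid.Coprod.inl : K →* Monoid.Coprod K L).range) :
    Function.Injective
      (Monoid.Coprod.lift (Monoid.Coprod.inl : K →* Monoid.Coprod K L)
        (zpowersHom (Monoid.Coprod K L) g) :
        Monoid.Coprod K (Multiplicative ℤ) →* Monoid.Coprod K L) := by
  classical
  set Φ : Monoid.Coprod K (Multiplicative ℤ) →* Monoid.Coprod K L :=
    Monoid.Coprod.lift Monoid.Coprod.inl (zpowersHom (Monoid.Coprod K L) g) with hΦ
  let A : Type (max u₁ u₂) := ULift.{u₂} K
  let B : Type (max u₁ u₂) := ULift.{u₁} L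
  let T : Type (max u₁ u₂) := ULift.{max u₁ u₂} (Multiplicative ℤ)
  let eK : K →* A := (MulEquiv.ulift.symm : K ≃* A).toMonoidHom
  let eL : L →* B := (MulEquiv.ulift.symm : L ≃* B).toMonoidHom
  let eZ : Multiplicative ℤ →* T := (MulEquiv.ulift.symm : Multiplicative ℤ ≃* T).toMonoidHom
  let GI := CoprodI (FOF.Fam A B)
  let ofA : A →* GI := CoprodI.of (M := FOF.Fam A B) (i := true)
  let ofB : B →* GI := CoprodI.of (M := FOF.Fam A B) (i := false)
  let DI := CoprodI (FOF.Fam A T)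
  let ofA' : A →* DI := CoprodI.of (M := FOF.Fam A T) (i := true)
  let ofT' : T →* DI := CoprodI.of (M := FOF.Fam A T) (i := false)
  -- the isomorphisms (we only need one-sided inverses)
  let τ : Monoid.Coprod K L →* GI := Monoid.Coprod.lift (ofA.comp eK) (ofB.comp eL)
  let σ : GI →* Monoid.Coprod K L :=
    FOF.pairLift (Monoid.Coprod.inl.comp (MulEquiv.ulift.toMonoidHom : A →* K))
      (Monoid.Coprod.inr.comp (MulEquiv.ulift.toMonoidHom : B →* L))
  have hστ : ∀ z, σ (τ z) = z := by
    have : σ.comp τ = MonoidHom.id _ := by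
      apply Monoid.Coprod.hom_ext
      · apply MonoidHom.ext; intro k
        simp only [MonoidHom.comp_apply, MonoidHom.id_apply]
        have e2 : τ (Monoid.Coprod.inl k) = ofA (eK k) := Monoid.Coprod.lift_apply_inl _ _ _
        rw [e2]
        have e3 : σ (ofA (eK k)) = Monoid.Coprod.inl (MulEquiv.ulift (eK k)) :=
          FOF.pairLift_of_true _ _ _
        rw [e3]
        simp [eK]
      · apply MonoidHom.ext; intro k
        simp only [MonoidHom.comp_apply, MonoidHom.id_apply]
        have e2 : τ (Monoid.Coprod.inr k) = ofB (eL k) := Monoid.Coprod.lift_apply_inr _ _ _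
        rw [e2]
        have e3 : σ (ofB (eL k)) = Monoid.Coprod.inr (MulEquiv.ulift (eL k)) :=
          FOF.pairLift_of_false _ _ _
        rw [e3]
        simp [eL]
    exact fun z => DFunLike.congr_fun this z
  let τ' : Monoid.Coprod K (Multiplicative ℤ) →* DI :=
    Monoid.Coprod.lift (ofA'.comp eK) (ofT'.comp eZ)
  let σ' : DI →* Monoid.Coprod K (Multiplicative ℤ) :=
    FOF.pairLift (Monoid.Coprod.inl.comp (MulEquiv.ulift.toMonoidHom : A →* K))
      (Monoid.Coprod.inr.comp (MulEquiv.ulift.toMonoidHom : T →* Multiplicative ℤ))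
  have hστ' : ∀ z, σ' (τ' z) = z := by
    have : σ'.comp τ' = MonoidHom.id _ := by
      apply Monoid.Coprod.hom_ext
      · apply MonoidHom.ext; intro k
        simp only [MonoidHom.comp_apply, MonoidHom.id_apply]
        have e2 : τ' (Monoid.Coprod.inl k) = ofA' (eK k) := Monoid.Coprod.lift_apply_inl _ _ _
        rw [e2]
        have e3 : σ' (ofA' (eK k)) = Monoid.Coprod.inl (MulEquiv.ulift (eK k)) :=
          FOF.pairLift_of_true _ _ _
        rw [e3]
        simp [eK]
      · apply MonoidHom.ext; intro k
        simp only [MonoidHom.comp_apply, MonoidHom.id_apply]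
        have e2 : τ' (Monoid.Coprod.inr k) = ofT' (eZ k) := Monoid.Coprod.lift_apply_inr _ _ _
        rw [e2]
        have e3 : σ' (ofT' (eZ k)) = Monoid.Coprod.inr (MulEquiv.ulift (eZ k)) :=
          FOF.pairLift_of_false _ _ _
        rw [e3]
        simp [eZ]
    exact fun z => DFunLike.congr_fun this z
  -- conjugate g into a good position
  set x : GI := τ g with hx
  have hxof : ∀ a : A, x ≠ CoprodI.of (M := FOF.Fam A B) (i := true) a := by
    intro a h
    apply hg
    refine ⟨MulEquiv.ulift a, ?_⟩
    have h2 := congrArg σ h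
    rw [hστ] at h2
    rw [h2]
    have e3 : σ (CoprodI.of (M := FOF.Fam A B) (i := true) a) =
        Monoid.Coprod.inl (MulEquiv.ulift a) := FOF.pairLift_of_true _ _ _
    rw [e3]
  obtain ⟨a, b, hSW⟩ := FOF.exists_conj x hxof
  set x' : GI := CoprodI.of (M := FOF.Fam A B) (i := true) a * x *
    CoprodI.of (M := FOF.Fam A B) (i := true) b with hx'
  -- torsion-freeness and cardinality
  have hA : Monoid.IsTorsionFree A := FOF.ulift_isTorsionFree hK
  have hB : Monoid.IsTorsionFree B := FOF.ulift_isTorsionFree hL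
  haveI : Infinite T := instInfiniteULift
  have hcard : (3 : Cardinal) ≤ Cardinal.mk T := by
    have h1 : ((3 : ℕ) : Cardinal) ≤ Cardinal.mk T :=
      le_trans (Cardinal.nat_lt_aleph0 3).le (Cardinal.aleph0_le_mk T)
    exact_mod_cast h1
  -- the injective map from the coproduct over `Fam A T`
  let ζ' : T →* GI := (zpowersHom GI x').comp (MulEquiv.ulift.toMonoidHom : T →* Multiplicative ℤ)
  have hζ' : ∀ t : T, t ≠ 1 → FOF.SW false false (ζ' t) := by
    intro t ht
    have hn : Multiplicative.toAdd t.down ≠ 0 := by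
      intro h0
      apply ht
      have hdown : t.down = 1 := by
        rw [← ofAdd_toAdd t.down, h0, ofAdd_zero]
      cases t
      exact congrArg ULift.up hdown
    exact FOF.SW.zpow hA hB hSW hn
  let Ψ : DI →* GI := FOF.pairLift ofA ζ'
  have hΨinj : Function.Injective Ψ := FOF.core hcard ζ' hζ'
  -- the "conjugating" endomorphisms of `DI`
  let t₀ : T := eZ (Multiplicative.ofAdd 1)
  let c : DI := ofA' a⁻¹ * ofT' t₀ * ofA' b⁻¹
  let c' : DI := ofA' a * ofT' t₀ * ofA' b
  let ρ : T →* DI := (zpowersHom DI c).comp (MulEquiv.ulift.toMonoidHom : T →* Multiplicative ℤ)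
  let ρ' : T →* DI := (zpowersHom DI c').comp (MulEquiv.ulift.toMonoidHom : T →* Multiplicative ℤ)
  let α : DI →* DI := FOF.pairLift ofA' ρ
  let β : DI →* DI := FOF.pairLift ofA' ρ'
  have ht₀pow : ∀ t : T, t₀ ^ (Multiplicative.toAdd t.down) = t := by
    intro t
    cases t with
    | up z =>
        have h1 : (t₀ ^ (Multiplicative.toAdd z)).down = z := by
          have h2 := map_zpow (MulEquiv.ulift.toMonoidHom : T →* Multiplicative ℤ) t₀
            (Multiplicative.toAdd z)
          have h3 : (MulEquiv.ulift.toMonoidHom : T →* Multiplicative ℤ) t₀ =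
              Multiplicative.ofAdd 1 := rfl
          rw [h3] at h2
          have h4 : (t₀ ^ (Multiplicative.toAdd z)).down =
              (Multiplicative.ofAdd 1) ^ (Multiplicative.toAdd z) := h2
          rw [h4]
          apply Multiplicative.toAdd.injective
          rw [toAdd_zpow]
          simp
        calc t₀ ^ (Multiplicative.toAdd z) =
            ULift.up ((t₀ ^ (Multiplicative.toAdd z)).down) := rfl
        _ = ULift.up z := by rw [h1]
  have hβα : ∀ z, β (α z) = z := by
    have hρ' : ρ' t₀ = c' := by
      show c' ^ (Multiplicative.toAdd (t₀.down)) = c'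
      have : Multiplicative.toAdd t₀.down = 1 := rfl
      rw [this, zpow_one]
    have hβc : β c = ofT' t₀ := by
      show β (ofA' a⁻¹ * ofT' t₀ * ofA' b⁻¹) = ofT' t₀
      rw [map_mul, map_mul]
      have e1 : β (ofA' a⁻¹) = ofA' a⁻¹ := FOF.pairLift_of_true _ _ _
      have e2 : β (ofA' b⁻¹) = ofA' b⁻¹ := FOF.pairLift_of_true _ _ _
      have e3 : β (ofT' t₀) = c' := by
        have h4 : β (ofT' t₀) = ρ' t₀ := FOF.pairLift_of_false _ _ _
        rw [h4, hρ']
      rw [e1, e2, e3]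
      show ofA' a⁻¹ * (ofA' a * ofT' t₀ * ofA' b) * ofA' b⁻¹ = ofT' t₀
      rw [map_inv, map_inv]
      group
    have : β.comp α = MonoidHom.id DI := by
      apply FOF.pair_hom_ext
      · apply MonoidHom.ext; intro y
        show β (α (ofA' y)) = ofA' y
        have h1 : α (ofA' y) = ofA' y := FOF.pairLift_of_true _ _ _
        have h2 : β (ofA' y) = ofA' y := FOF.pairLift_of_true _ _ _
        rw [h1, h2]
      · apply MonoidHom.ext; intro t
        show β (α (ofT' t)) = ofT' t
        have h1 : α (ofT' t) = c ^ (Multiplicative.toAdd t.down) :=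
          FOF.pairLift_of_false _ _ _
        rw [h1, map_zpow, hβc, ← map_zpow, ht₀pow]
    exact fun z => DFunLike.congr_fun this z
  -- the main compatibility
  have hΨc : Ψ c = x := by
    have hζt₀ : ζ' t₀ = x' := by
      show x' ^ (Multiplicative.toAdd (t₀.down)) = x'
      have : Multiplicative.toAdd t₀.down = 1 := rfl
      rw [this, zpow_one]
    show Ψ (ofA' a⁻¹ * ofT' t₀ * ofA' b⁻¹) = x
    rw [map_mul, map_mul]
    have e1 : Ψ (ofA' a⁻¹) = ofA a⁻¹ := FOF.pairLift_of_true _ _ _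
    have e2 : Ψ (ofA' b⁻¹) = ofA b⁻¹ := FOF.pairLift_of_true _ _ _
    have e3 : Ψ (ofT' t₀) = x' := by
      have h4 : Ψ (ofT' t₀) = ζ' t₀ := FOF.pairLift_of_false _ _ _
      rw [h4, hζt₀]
    rw [e1, e2, e3]
    show ofA a⁻¹ * (ofA a * x * ofA b) * ofA b⁻¹ = x
    rw [map_inv, map_inv]
    group
  have key : τ.comp Φ = Ψ.comp (α.comp τ') := by
    apply Monoid.Coprod.hom_ext
    · apply MonoidHom.ext; intro k
      show τ (Φ (Monoid.Coprod.inl k)) = Ψ (α (τ' (Monoid.Coprod.inl k)))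
      have e1 : Φ (Monoid.Coprod.inl k) = Monoid.Coprod.inl k :=
        Monoid.Coprod.lift_apply_inl _ _ _
      have e2 : τ (Monoid.Coprod.inl k) = ofA (eK k) := Monoid.Coprod.lift_apply_inl _ _ _
      have e3 : τ' (Monoid.Coprod.inl k) = ofA' (eK k) := Monoid.Coprod.lift_apply_inl _ _ _
      have e4 : α (ofA' (eK k)) = ofA' (eK k) := FOF.pairLift_of_true _ _ _
      have e5 : Ψ (ofA' (eK k)) = ofA (eK k) := FOF.pairLift_of_true _ _ _
      rw [e1, e2, e3, e4, e5]
    · apply MonoidHom.ext; intro z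
      show τ (Φ (Monoid.Coprod.inr z)) = Ψ (α (τ' (Monoid.Coprod.inr z)))
      have hLHS : τ (Φ (Monoid.Coprod.inr z)) = x ^ (Multiplicative.toAdd z) := by
        rw [hΦ, Monoid.Coprod.lift_apply_inr, zpowersHom_apply, map_zpow, ← hx]
      have hτ' : τ' (Monoid.Coprod.inr z) = ofT' (eZ z) :=
        Monoid.Coprod.lift_apply_inr _ _ _
      have hα : α (ofT' (eZ z)) = c ^ (Multiplicative.toAdd z) :=
        FOF.pairLift_of_false _ _ _
      rw [hLHS, hτ', hα, map_zpow, hΨc]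
  intro p q hpq
  have h1 : Ψ (α (τ' p)) = Ψ (α (τ' q)) := by
    have e1 := DFunLike.congr_fun key p
    have e2 := DFunLike.congr_fun key q
    simp only [MonoidHom.comp_apply] at e1 e2
    rw [← e1, ← e2, hpq]
  have h2 := hΨinj h1
  have h3 := congrArg β h2
  rw [hβα, hβα] at h3
  have h4 := congrArg σ' h3
  rw [hστ', hστ'] at h4
  exact h4

theorem free_from_element_outside_factor (K L : Type*) [Group K] [Group L]
    (hK : Monoid.IsTorsionFree K) (hL : Monoid.IsTorsionFree L)
    (g : Monoid.Coprod K L)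
    (hg : g ∉ (Monoid.Coprod.inl : K →* Monoid.Coprod K L).range) :
    Function.Injective
      (Monoid.Coprod.lift (Monoid.Coprod.inl : K →* Monoid.Coprod K L)
        (zpowersHom (Monoid.Coprod K L) g) :
        Monoid.Coprod K (Multiplicative ℤ) →* Monoid.Coprod K L) :=
  free_from_element_outside_factor' K L hK hL g hg
end

section
/- Let A be a nontrivial torsion-free group. Then the free product A * ℤ contains two elements which freely generate a free subgroup of rank 2. -/
open Monoid Pointwise

universe u

/-- The two-factor family for the coproduct `A * ℤ`. -/
def Fc (A : Type u) : Bool → Type u := fun b => cond b A (ULift (Multiplicative ℤ))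

instance FcGroup (A : Type u) [Group A] : ∀ b, Group (Fc A b) := fun b =>
  Bool.rec (inferInstanceAs (Group (ULift (Multiplicative ℤ))))
    (inferInstanceAs (Group A)) b

/-- The component maps back from the indexed coproduct. -/
def bwdFam (A : Type u) [Group A] : ∀ b : Bool, Fc A b →* Coprod A (Multiplicative ℤ) :=
  fun b => Bool.rec
    ((Coprod.inr (M := A)).comp (MulEquiv.ulift (α := Multiplicative ℤ)).toMonoidHom)
    (Coprod.inl (N := Multiplicative ℤ)) b

/-- The binary coproduct `A ∗ ℤ` is the indexed coproduct of the family `Fc A`. -/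
def coprodEquivCoprodI (A : Type u) [Group A] :
    Coprod A (Multiplicative ℤ) ≃* CoprodI (Fc A) :=
  MonoidHom.toMulEquiv
    (Coprod.lift (CoprodI.of (M := Fc A) (i := true))
      ((CoprodI.of (M := Fc A) (i := false)).comp
        (MulEquiv.ulift (α := Multiplicative ℤ)).symm.toMonoidHom))
    (CoprodI.lift (bwdFam A))
    (Coprod.hom_ext (MonoidHom.ext fun x => CoprodI.lift_of (bwdFam A) (i := true) x)
      (MonoidHom.ext fun x =>
        CoprodI.lift_of (bwdFam A) (i := false) (ULift.up x)))
    (CoprodI.ext_hom _ _ (by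
      rintro (_|_) <;>
        exact MonoidHom.ext fun x =>
          congrArg (Coprod.lift (CoprodI.of (M := Fc A) (i := true))
            ((CoprodI.of (M := Fc A) (i := false)).comp
              (MulEquiv.ulift (α := Multiplicative ℤ)).symm.toMonoidHom))
            (CoprodI.lift_of (bwdFam A) x)))

theorem free_subgroup_in_free_product_with_Z (A : Type*) [Group A] [Nontrivial A]
    (hA : ∀ g : A, g ≠ 1 → ¬IsOfFinOrder g) :
    ∃ x y : Monoid.Coprod A (Multiplicative ℤ), FreelyGenerateF2 x y := by
  classical
  obtain ⟨g, hg⟩ := exists_ne (1 : A)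
  have hgpow : ∀ n : ℤ, n ≠ 0 → g ^ n ≠ 1 := by
    intro n hn h
    refine hA g hg ?_
    rcases lt_or_gt_of_ne hn with h0 | h0
    · refine isOfFinOrder_iff_pow_eq_one.2 ⟨(-n).toNat, by omega, ?_⟩
      rw [← zpow_natCast, Int.toNat_of_nonneg (by omega), zpow_neg, h, inv_one]
    · refine isOfFinOrder_iff_pow_eq_one.2 ⟨n.toNat, by omega, ?_⟩
      rw [← zpow_natCast, Int.toNat_of_nonneg (by omega), h]
  -- the distinguished letters in each factor
  let c : ∀ b, Fc A b := fun b => Bool.rec (ULift.up (Multiplicative.ofAdd 1)) g b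
  have hcpow : ∀ b, ∀ n : ℤ, n ≠ 0 → c b ^ n ≠ 1 := by
    rintro (_|_) n hn
    · intro h
      apply hn
      have h1 : (Multiplicative.ofAdd (1 : ℤ)) ^ n = 1 := congrArg ULift.down h
      simpa using congrArg Multiplicative.toAdd h1
    · exact hgpow n hn
  have hc : ∀ b, c b ≠ 1 := fun b => by
    have := hcpow b 1 one_ne_zero
    simpa using this
  -- the ping-pong data
  let f : ∀ b : Bool, FreeGroup Unit →* CoprodI (Fc A) := fun b =>
    (CoprodI.of (M := Fc A) (i := b)).comp (FreeGroup.lift fun _ => c b)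
  let X : Bool → Set (CoprodI.Word (Fc A)) := fun b => {w | w.fstIdx = some b}
  have hXne : ∀ b, (X b).Nonempty := fun b =>
    ⟨CoprodI.Word.cons (c b) CoprodI.Word.empty (by simp [CoprodI.Word.fstIdx,
      CoprodI.Word.empty]) (hc b), CoprodI.Word.fstIdx_cons _ _ _ _⟩
  have hXdisj : Pairwise (Function.onFun Disjoint X) := by
    intro i j hij
    simp only [Function.onFun]
    rw [Set.disjoint_left]
    intro w hwi hwj
    exact hij (Option.some_injective _ (hwi.symm.trans hwj))
  have hpp : Pairwise fun i j => ∀ h : FreeGroup Unit, h ≠ 1 → f i h • X j ⊆ X i := by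
    intro i j hij h hne1
    have hrep : h = FreeGroup.of () ^ (FreeGroup.freeGroupUnitEquivInt h) :=
      (FreeGroup.freeGroupUnitEquivInt.symm_apply_apply h).symm
    set n : ℤ := FreeGroup.freeGroupUnitEquivInt h with hn
    have hn0 : n ≠ 0 := by
      intro h0
      apply hne1
      rw [hrep, h0, zpow_zero]
    have hfh : f i h = CoprodI.of (c i ^ n) := by
      rw [hrep]
      simp [f, map_zpow]
    rintro x ⟨w, hw, rfl⟩
    rw [hfh]
    show CoprodI.of (c i ^ n) • w ∈ X i
    have hfst : w.fstIdx ≠ some i := by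
      rw [hw]
      exact fun h => hij (Option.some_injective _ h).symm
    rw [← CoprodI.Word.cons_eq_smul (h1 := hfst) (h2 := hcpow i n hn0)]
    exact CoprodI.Word.fstIdx_cons _ _ _ _
  have hinj : Function.Injective (CoprodI.lift f) := by
    refine CoprodI.lift_injective_of_ping_pong f ?_ X hXne hXdisj hpp
    right
    refine ⟨true, ?_⟩
    rw [Cardinal.mk_congr FreeGroup.freeGroupUnitEquivInt, Cardinal.mk_int]
    exact_mod_cast (Cardinal.nat_lt_aleph0 3).le
  -- assemble the two elements
  let e := coprodEquivCoprodI A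
  refine ⟨e.symm (CoprodI.of (c true)), e.symm (CoprodI.of (c false)), ?_⟩
  have hfactor : (FreeGroup.lift (fun b : Bool => if b then
        e.symm (CoprodI.of (c true))
        else e.symm (CoprodI.of (c false))) :
      FreeGroup Bool →* Coprod A (Multiplicative ℤ)) =
      (e.symm.toMonoidHom.comp (CoprodI.lift f)).comp
        (freeGroupEquivCoprodI (ι := Bool)).toMonoidHom := by
    ext b
    cases b <;> simp [f, c, e]
    · exact congrArg CoprodI.of (FreeGroup.lift_apply_of (β := Fc A false) (f := fun _ => ULift.up (Multiplicative.ofAdd 1)) (x := ())).symm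
    · exact congrArg CoprodI.of (FreeGroup.lift_apply_of (β := Fc A true) (f := fun _ => g) (x := ())).symm
  rw [FreelyGenerateF2, hfactor]
  exact e.symm.injective.comp (hinj.comp (freeGroupEquivCoprodI (ι := Bool)).injective)
end
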